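/- arXiv:2301.11687 — 4 statements merged into one kernel-verified Lean document; each statement's English description precedes it below -/
import Mathlib

section
/- Under the dataset collection assumption with η ∈ (0,1], the behavioral cloning policy π^BC trained on the expert dataset D^E satisfies E[V(π^E) − V(π^BC)] ≤ min{H, 2|S|H²/(η N_tot)}, where the expectation is over the randomness of the dataset collection. -/
open Finset

/-- An episodic MDP `M = (S, A, P, r, H, ρ)` with finite state space `S`, finite action
space `A`, horizon `H`, initial state distribution `ρ`, non-stationary transitions `P` and
rewards `r` taking values in `[0,1]`.  Time steps are indexed by `0, 1, …, H-1`. -/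
structure MDP (S A : Type) [Fintype S] [Fintype A] where
  H : ℕ
  ρ : S → ℝ
  P : ℕ → S → A → S → ℝ
  r : ℕ → S → A → ℝ
  ρ_nonneg : ∀ s, 0 ≤ ρ s
  ρ_sum : ∑ s, ρ s = 1
  P_nonneg : ∀ h s a s', 0 ≤ P h s a s'
  P_sum : ∀ h s a, ∑ s', P h s a s' = 1
  r_nonneg : ∀ h s a, 0 ≤ r h s a
  r_le_one : ∀ h s a, r h s a ≤ 1

variable {S A : Type} [Fintype S] [Fintype A] [DecidableEq S] [DecidableEq A]

/-- A (time-dependent, stochastic) policy: `π h s a` is the probability of action `a`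
at state `s` in step `h`. -/
def IsPolicy (π : ℕ → S → A → ℝ) : Prop :=
  (∀ h s a, 0 ≤ π h s a) ∧ (∀ h s, ∑ a, π h s a = 1)

/-- A deterministic policy: at each step and state it puts all mass on a single action. -/
def IsDetPolicy (π : ℕ → S → A → ℝ) : Prop :=
  ∃ f : ℕ → S → A, ∀ h s a, π h s a = if a = f h s then 1 else 0

/-- The state distribution `d^π_h(s)` of policy `π` at step `h`. -/
noncomputable def dState (M : MDP S A) (π : ℕ → S → A → ℝ) : ℕ → S → ℝ
  | 0 => M.ρ
  | h + 1 => fun s' => ∑ s, ∑ a, dState M π h s * π h s a * M.P h s a s'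

/-- The state-action distribution `d^π_h(s, a)` of policy `π` at step `h`. -/
noncomputable def dSA (M : MDP S A) (π : ℕ → S → A → ℝ) (h : ℕ) (s : S) (a : A) : ℝ :=
  dState M π h s * π h s a

/-- The policy value `V(π) = E[Σ_{h} r_h(s_h, a_h)] = Σ_h Σ_{(s,a)} d^π_h(s,a) r_h(s,a)`. -/
noncomputable def value (M : MDP S A) (π : ℕ → S → A → ℝ) : ℝ :=
  ∑ h ∈ Finset.range M.H, ∑ s, ∑ a, dSA M π h s a * M.r h s a

/-- Probability that rolling out policy `π` in MDP `M` produces trajectory `tr`. -/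
noncomputable def trajProb (M : MDP S A) (π : ℕ → S → A → ℝ) (tr : Fin M.H → S × A) : ℝ :=
  ∏ h : Fin M.H,
    ((if (h : ℕ) = 0 then M.ρ (tr h).1 else 1) * π h (tr h).1 (tr h).2 *
      (if hh : (h : ℕ) + 1 < M.H then M.P h (tr h).1 (tr h).2 (tr ⟨(h : ℕ) + 1, hh⟩).1 else 1))

/-- A labeled dataset of `N` trajectories of length `H`; the Boolean label records whether
the trajectory was generated by the expert (`true`) or by the behavior policy (`false`).
The expert dataset `D^E` is the sub-dataset labeled `true`, the supplementary dataset `D^S`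
is the sub-dataset labeled `false`, and the union dataset `D^U` is the whole dataset. -/
abbrev Dataset (S A : Type) (H N : ℕ) := Fin N → (Fin H → S × A) × Bool

/-- Probability of observing the labeled dataset `D` under Assumption 1 (each of the `N`
trajectories is independently rolled out from the expert `πE` with probability `η` and
from the behavior policy `πβ` with probability `1 - η`). -/
noncomputable def datasetProb (M : MDP S A) (πE πβ : ℕ → S → A → ℝ) (η : ℝ) {N : ℕ}
    (D : Dataset S A M.H N) : ℝ :=
  ∏ i, (if (D i).2 then η * trajProb M πE (D i).1 else (1 - η) * trajProb M πβ (D i).1)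

/-- Expectation of `f` over the randomness of the dataset collection (Assumption 1). -/
noncomputable def expect (M : MDP S A) (πE πβ : ℕ → S → A → ℝ) (η : ℝ) (N : ℕ)
    (f : Dataset S A M.H N → ℝ) : ℝ :=
  ∑ D : Dataset S A M.H N, datasetProb M πE πβ η D * f D

/-- Whether the step-`h` state-action pair of trajectory `tr` equals `(s, a)`. -/
def hit {H : ℕ} (tr : Fin H → S × A) (h : ℕ) (s : S) (a : A) : Bool :=
  if hh : h < H then decide (tr ⟨h, hh⟩ = (s, a)) else false

/-- `n_h(s, a)`: the number of trajectories of `D` (among those whose label is selected by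
`keep`) whose step-`h` state-action pair is `(s, a)`. -/
def countSA {H N : ℕ} (D : Dataset S A H N) (keep : Bool → Bool) (h : ℕ) (s : S) (a : A) : ℕ :=
  (Finset.univ.filter fun i : Fin N => (keep (D i).2 && hit (D i).1 h s a) = true).card

/-- The behavioral cloning policy determined by counts `n`:
`π_h(a|s) = n_h(s,a)/n_h(s)` if `n_h(s) > 0` and `1/|A|` otherwise. -/
noncomputable def bcFromCounts (n : ℕ → S → A → ℕ) : ℕ → S → A → ℝ := fun h s a =>
  if 0 < ∑ a', n h s a' then (n h s a : ℝ) / (∑ a', (n h s a' : ℝ))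
  else 1 / (Fintype.card A : ℝ)

/-- The behavioral cloning policy of the sub-dataset of `D` selected by `keep`
(`keep = fun b => b` gives BC on the expert dataset `D^E`;
 `keep = fun _ => true` gives BC on the union dataset `D^U`, i.e., NBCU). -/
noncomputable def bcPolicy {H N : ℕ} (D : Dataset S A H N) (keep : Bool → Bool) :
    ℕ → S → A → ℝ :=
  bcFromCounts (fun h s a => countSA D keep h s a)

set_option linter.unusedSectionVars false
section BCAux

variable {S A : Type} [Fintype S] [Fintype A] [DecidableEq S] [DecidableEq A]

/-! ### Chain probabilities -/

/-- The step-`h` factor of the trajectory probability. -/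
noncomputable def fct (ρ₀ : S → ℝ) (π : ℕ → S → A → ℝ) (P : ℕ → S → A → S → ℝ)
    (n : ℕ) (tr : Fin n → S × A) (h : Fin n) : ℝ :=
  (if (h : ℕ) = 0 then ρ₀ (tr h).1 else 1) * π h (tr h).1 (tr h).2 *
    (if hh : (h : ℕ) + 1 < n then P h (tr h).1 (tr h).2 (tr ⟨(h : ℕ) + 1, hh⟩).1 else 1)

noncomputable def chainProb (ρ₀ : S → ℝ) (π : ℕ → S → A → ℝ) (P : ℕ → S → A → S → ℝ)
    (n : ℕ) (tr : Fin n → S × A) : ℝ :=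
  ∏ h : Fin n, fct ρ₀ π P n tr h

lemma trajProb_eq_chainProb (M : MDP S A) (π : ℕ → S → A → ℝ) (tr : Fin M.H → S × A) :
    trajProb M π tr = chainProb M.ρ π M.P M.H tr := rfl

lemma sum_snoc {X : Type} [Fintype X] (n : ℕ) (f : (Fin (n + 1) → X) → ℝ) :
    ∑ u : Fin (n + 1) → X, f u = ∑ x : X, ∑ tr : Fin n → X, f (Fin.snoc tr x) := by
  rw [← Equiv.sum_comp (Fin.snocEquiv (fun _ => X)) f, Fintype.sum_prod_type]
  rfl

lemma chainProb_zero (ρ₀ : S → ℝ) (π : ℕ → S → A → ℝ) (P : ℕ → S → A → S → ℝ)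
    (tr : Fin 0 → S × A) : chainProb ρ₀ π P 0 tr = 1 := by
  simp [chainProb]

lemma chainProb_one (ρ₀ : S → ℝ) (π : ℕ → S → A → ℝ) (P : ℕ → S → A → S → ℝ)
    (u : Fin 1 → S × A) : chainProb ρ₀ π P 1 u = ρ₀ (u 0).1 * π 0 (u 0).1 (u 0).2 := by
  simp [chainProb, fct]

lemma fct_castSucc_snoc (ρ₀ : S → ℝ) (π : ℕ → S → A → ℝ) (P : ℕ → S → A → S → ℝ)
    (n : ℕ) (tr : Fin (n + 1) → S × A) (x : S × A) (h : Fin (n + 1)) :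
    fct ρ₀ π P (n + 2) (Fin.snoc tr x) h.castSucc =
      fct ρ₀ π P (n + 1) tr h *
        (if h = Fin.last n then P n (tr (Fin.last n)).1 (tr (Fin.last n)).2 x.1 else 1) := by
  unfold fct
  have hcs : ((h.castSucc : Fin (n + 2)) : ℕ) = (h : ℕ) := rfl
  have hsc : (Fin.snoc tr x : Fin (n + 2) → S × A) h.castSucc = tr h := Fin.snoc_castSucc _ _ _
  by_cases hl : h = Fin.last n
  · subst hl
    have hv : ((Fin.last n : Fin (n + 1)) : ℕ) = n := rfl
    have h2 : ¬ ((Fin.last n : Fin (n+1)) : ℕ) + 1 < n + 1 := by omega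
    have h3 : ((Fin.last n : Fin (n+1)) : ℕ) + 1 < n + 2 := by omega
    simp only [Fin.coe_castSucc, Fin.snoc_castSucc]
    rw [dif_neg h2, dif_pos h3]
    have hidx : (⟨((Fin.last n : Fin (n+1)) : ℕ) + 1, h3⟩ : Fin (n + 2)) = Fin.last (n + 1) := by
      ext; simp [hv]
    rw [hidx, Fin.snoc_last]
    simp [hv, mul_assoc]
  · have hlt : (h : ℕ) < n := by
      have := h.isLt
      rcases Nat.lt_or_ge (h : ℕ) n with h' | h'
      · exact h'
      · exact absurd (Fin.ext (by omega : (h : ℕ) = n)) hl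
    have h2 : (h : ℕ) + 1 < n + 1 := by omega
    have h3 : (h : ℕ) + 1 < n + 2 := by omega
    simp only [Fin.coe_castSucc, Fin.snoc_castSucc]
    rw [dif_pos h2, dif_pos h3]
    have hidx : (⟨(h : ℕ) + 1, h3⟩ : Fin (n + 2)) =
        Fin.castSucc (⟨(h : ℕ) + 1, h2⟩ : Fin (n + 1)) := by
      ext; rfl
    rw [hidx, Fin.snoc_castSucc, if_neg hl]
    ring

lemma fct_last_snoc (ρ₀ : S → ℝ) (π : ℕ → S → A → ℝ) (P : ℕ → S → A → S → ℝ)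
    (n : ℕ) (tr : Fin (n + 1) → S × A) (x : S × A) :
    fct ρ₀ π P (n + 2) (Fin.snoc tr x) (Fin.last (n + 1)) = π (n + 1) x.1 x.2 := by
  unfold fct
  have hv : ((Fin.last (n + 1) : Fin (n + 2)) : ℕ) = n + 1 := rfl
  rw [Fin.snoc_last]
  rw [hv, if_neg (by omega), dif_neg (by omega)]
  ring

lemma chainProb_snoc (ρ₀ : S → ℝ) (π : ℕ → S → A → ℝ) (P : ℕ → S → A → S → ℝ)
    (n : ℕ) (tr : Fin (n + 1) → S × A) (x : S × A) :
    chainProb ρ₀ π P (n + 2) (Fin.snoc tr x) =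
      chainProb ρ₀ π P (n + 1) tr *
        (P n (tr (Fin.last n)).1 (tr (Fin.last n)).2 x.1 * π (n + 1) x.1 x.2) := by
  unfold chainProb
  rw [Fin.prod_univ_castSucc]
  rw [Finset.prod_congr rfl (fun h _ => fct_castSucc_snoc ρ₀ π P n tr x h),
    Finset.prod_mul_distrib, Finset.prod_ite_eq' Finset.univ (Fin.last n)
      (fun _ => P n (tr (Fin.last n)).1 (tr (Fin.last n)).2 x.1),
    fct_last_snoc]
  simp [mul_assoc]

end BCAux
section BCAux2
set_option linter.unusedSectionVars false

variable {S A : Type} [Fintype S] [Fintype A] [DecidableEq S] [DecidableEq A]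

lemma dState_nonneg (M : MDP S A) (π : ℕ → S → A → ℝ) (hπ : ∀ h s a, 0 ≤ π h s a) :
    ∀ h s, 0 ≤ dState M π h s := by
  intro h
  induction h with
  | zero => exact M.ρ_nonneg
  | succ h ih =>
    intro s'
    refine Finset.sum_nonneg fun s _ => Finset.sum_nonneg fun a _ => ?_
    exact mul_nonneg (mul_nonneg (ih s) (hπ h s a)) (M.P_nonneg h s a s')

lemma dState_sum (M : MDP S A) (π : ℕ → S → A → ℝ) (hπ : ∀ h s, ∑ a, π h s a = 1) :
    ∀ h, ∑ s, dState M π h s = 1 := by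
  intro h
  induction h with
  | zero => exact M.ρ_sum
  | succ h ih =>
    show ∑ s', ∑ s, ∑ a, dState M π h s * π h s a * M.P h s a s' = 1
    rw [Finset.sum_comm]
    have key : ∀ s, ∑ s', ∑ a, dState M π h s * π h s a * M.P h s a s' = dState M π h s := by
      intro s
      rw [Finset.sum_comm]
      have : ∀ a, ∑ s', dState M π h s * π h s a * M.P h s a s' = dState M π h s * π h s a := by
        intro a
        rw [← Finset.mul_sum, M.P_sum, mul_one]
      rw [Finset.sum_congr rfl fun a _ => this a, ← Finset.mul_sum, hπ, mul_one]
    rw [Finset.sum_congr rfl fun s _ => key s, ih]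

lemma dState_le_one (M : MDP S A) (π : ℕ → S → A → ℝ) (hπ0 : ∀ h s a, 0 ≤ π h s a)
    (hπ : ∀ h s, ∑ a, π h s a = 1) (h : ℕ) (s : S) : dState M π h s ≤ 1 := by
  rw [← dState_sum M π hπ h]
  exact Finset.single_le_sum (fun s' _ => dState_nonneg M π hπ0 h s') (Finset.mem_univ s)

/-- The marginal of the trajectory distribution at step `h` is `dSA`. -/
lemma chain_marginal (M : MDP S A) (π : ℕ → S → A → ℝ) (hπ : ∀ h s, ∑ a, π h s a = 1) :
    ∀ (n h : ℕ) (hh : h < n) (g : S × A → ℝ),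
      ∑ tr : Fin n → S × A, chainProb M.ρ π M.P n tr * g (tr ⟨h, hh⟩) =
        ∑ s, ∑ a, dState M π h s * π h s a * g (s, a) := by
  intro n
  induction n with
  | zero => intro h hh; omega
  | succ n ih =>
    intro h hh g
    rw [sum_snoc]
    by_cases hhn : h = n
    · subst hhn
      have hlast : (⟨h, hh⟩ : Fin (h + 1)) = Fin.last h := rfl
      cases h with
      | zero =>
        have huniq : ∀ x : S × A, ∑ tr : Fin 0 → S × A,
            chainProb M.ρ π M.P 1 (Fin.snoc tr x) * g ((Fin.snoc tr x : Fin 1 → S × A) ⟨0, hh⟩) =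
            M.ρ x.1 * π 0 x.1 x.2 * g x := by
          intro x
          rw [Fintype.sum_unique]
          have h0 : ((Fin.snoc (default : Fin 0 → S × A) x : Fin 1 → S × A) ⟨0, hh⟩) = x := by
            have : (⟨0, hh⟩ : Fin 1) = Fin.last 0 := rfl
            rw [this, Fin.snoc_last]
          rw [chainProb_one, h0]
          have h1 : ((Fin.snoc (default : Fin 0 → S × A) x : Fin 1 → S × A) 0) = x := by
            have : (0 : Fin 1) = Fin.last 0 := rfl
            rw [this, Fin.snoc_last]
          rw [h1]
        rw [Finset.sum_congr rfl fun x _ => huniq x, Fintype.sum_prod_type]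
        exact Finset.sum_congr rfl fun s _ => Finset.sum_congr rfl fun a _ => by
          show M.ρ s * π 0 s a * g (s, a) = dState M π 0 s * π 0 s a * g (s, a)
          rfl
      | succ m =>
        have step : ∀ x : S × A, ∑ tr : Fin (m + 1) → S × A,
            chainProb M.ρ π M.P (m + 2) (Fin.snoc tr x) * g ((Fin.snoc tr x : Fin (m + 2) → S × A) ⟨m + 1, hh⟩) =
            dState M π (m + 1) x.1 * (π (m + 1) x.1 x.2 * g x) := by
          intro x
          have hidx : (⟨m + 1, hh⟩ : Fin (m + 2)) = Fin.last (m + 1) := rfl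
          have e1 : ∀ tr : Fin (m + 1) → S × A,
              chainProb M.ρ π M.P (m + 2) (Fin.snoc tr x) * g ((Fin.snoc tr x : Fin (m + 2) → S × A) ⟨m + 1, hh⟩) =
              chainProb M.ρ π M.P (m + 1) tr *
                (fun p : S × A => M.P m p.1 p.2 x.1) (tr ⟨m, Nat.lt_succ_self m⟩) *
                (π (m + 1) x.1 x.2 * g x) := by
            intro tr
            rw [hidx, Fin.snoc_last, chainProb_snoc]
            have : (⟨m, Nat.lt_succ_self m⟩ : Fin (m + 1)) = Fin.last m := rfl
            rw [this]
            ring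
          rw [Finset.sum_congr rfl fun tr _ => e1 tr, ← Finset.sum_mul,
            ih m (Nat.lt_succ_self m) (fun p => M.P m p.1 p.2 x.1)]
          show (∑ s, ∑ a, dState M π m s * π m s a * M.P m s a x.1) * (π (m + 1) x.1 x.2 * g x) = _
          rfl
        rw [Finset.sum_congr rfl fun x _ => step x, Fintype.sum_prod_type]
        exact Finset.sum_congr rfl fun s _ => Finset.sum_congr rfl fun a _ => by ring
    · have hh' : h < n := by omega
      have hn1 : 0 < n := by omega
      have e2 : ∀ x : S × A, ∀ tr : Fin n → S × A,
          chainProb M.ρ π M.P (n + 1) (Fin.snoc tr x) * g ((Fin.snoc tr x : Fin (n + 1) → S × A) ⟨h, hh⟩) =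
          chainProb M.ρ π M.P (n + 1) (Fin.snoc tr x) * g (tr ⟨h, hh'⟩) := by
        intro x tr
        have : (⟨h, hh⟩ : Fin (n + 1)) = Fin.castSucc ⟨h, hh'⟩ := rfl
        rw [this, Fin.snoc_castSucc]
      calc ∑ x : S × A, ∑ tr : Fin n → S × A,
            chainProb M.ρ π M.P (n + 1) (Fin.snoc tr x) * g ((Fin.snoc tr x : Fin (n + 1) → S × A) ⟨h, hh⟩)
          = ∑ tr : Fin n → S × A,
            (∑ x : S × A, chainProb M.ρ π M.P (n + 1) (Fin.snoc tr x)) * g (tr ⟨h, hh'⟩) := by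
            rw [Finset.sum_comm]
            exact Finset.sum_congr rfl fun tr _ => by
              rw [Finset.sum_mul]
              exact Finset.sum_congr rfl fun x _ => e2 x tr
        _ = ∑ tr : Fin n → S × A, chainProb M.ρ π M.P n tr * g (tr ⟨h, hh'⟩) := by
            refine Finset.sum_congr rfl fun tr _ => ?_
            congr 1
            -- ∑ x, chainProb (n+1) (snoc tr x) = chainProb n tr
            cases n with
            | zero => omega
            | succ m =>
              have e3 : ∀ x : S × A, chainProb M.ρ π M.P (m + 2) (Fin.snoc tr x) =
                  chainProb M.ρ π M.P (m + 1) tr *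
                    (M.P m (tr (Fin.last m)).1 (tr (Fin.last m)).2 x.1 * π (m + 1) x.1 x.2) :=
                fun x => chainProb_snoc _ _ _ _ _ _
              rw [Finset.sum_congr rfl fun x _ => e3 x, ← Finset.mul_sum]
              rw [Fintype.sum_prod_type]
              have e4 : ∀ s', ∑ a, M.P m (tr (Fin.last m)).1 (tr (Fin.last m)).2 s' *
                  π (m + 1) s' a = M.P m (tr (Fin.last m)).1 (tr (Fin.last m)).2 s' := by
                intro s'
                rw [← Finset.mul_sum, hπ, mul_one]
              rw [Finset.sum_congr rfl fun s' _ => e4 s', M.P_sum, mul_one]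
        _ = _ := ih h hh' g

lemma traj_marginal (M : MDP S A) (π : ℕ → S → A → ℝ) (hπ : ∀ h s, ∑ a, π h s a = 1)
    (h : ℕ) (hh : h < M.H) (g : S × A → ℝ) :
    ∑ tr : Fin M.H → S × A, trajProb M π tr * g (tr ⟨h, hh⟩) =
      ∑ s, ∑ a, dState M π h s * π h s a * g (s, a) :=
  chain_marginal M π hπ M.H h hh g

lemma sum_trajProb (M : MDP S A) (π : ℕ → S → A → ℝ) (hπ : ∀ h s, ∑ a, π h s a = 1) :
    ∑ tr : Fin M.H → S × A, trajProb M π tr = 1 := by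
  rcases Nat.eq_zero_or_pos M.H with h0 | h0
  · haveI : IsEmpty (Fin M.H) := ⟨fun i => absurd i.2 (by omega)⟩
    rw [Fintype.sum_unique]
    show trajProb M π default = 1
    unfold trajProb
    exact Finset.prod_of_isEmpty _
  · have := traj_marginal M π hπ 0 h0 (fun _ => 1)
    simp only [mul_one] at this
    rw [this]
    have : ∀ s, ∑ a, dState M π 0 s * π 0 s a = dState M π 0 s := by
      intro s
      rw [← Finset.mul_sum, hπ, mul_one]
    rw [Finset.sum_congr rfl fun s _ => this s]
    exact dState_sum M π hπ 0

lemma trajProb_nonneg (M : MDP S A) (π : ℕ → S → A → ℝ) (hπ0 : ∀ h s a, 0 ≤ π h s a)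
    (tr : Fin M.H → S × A) : 0 ≤ trajProb M π tr := by
  refine Finset.prod_nonneg fun h _ => ?_
  refine mul_nonneg (mul_nonneg ?_ (hπ0 _ _ _)) ?_
  · split <;> [exact M.ρ_nonneg _; norm_num]
  · split <;> [exact M.P_nonneg _ _ _ _; norm_num]

end BCAux2
section BCAux3
set_option linter.unusedSectionVars false

variable {S A : Type} [Fintype S] [Fintype A] [DecidableEq S] [DecidableEq A]

lemma value_nonneg (M : MDP S A) (π : ℕ → S → A → ℝ) (hπ0 : ∀ h s a, 0 ≤ π h s a) :
    0 ≤ value M π := by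
  refine Finset.sum_nonneg fun h _ => Finset.sum_nonneg fun s _ =>
    Finset.sum_nonneg fun a _ => ?_
  exact mul_nonneg (mul_nonneg (dState_nonneg M π hπ0 h s) (hπ0 h s a)) (M.r_nonneg h s a)

lemma value_le (M : MDP S A) (π : ℕ → S → A → ℝ) (hπ0 : ∀ h s a, 0 ≤ π h s a)
    (hπ : ∀ h s, ∑ a, π h s a = 1) : value M π ≤ (M.H : ℝ) := by
  have hstep : ∀ h, ∑ s, ∑ a, dSA M π h s a * M.r h s a ≤ 1 := by
    intro h
    have h1 : ∀ s, ∑ a, dSA M π h s a * M.r h s a ≤ dState M π h s := by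
      intro s
      have : ∀ a, dSA M π h s a * M.r h s a ≤ dSA M π h s a := by
        intro a
        have hnn : 0 ≤ dSA M π h s a := mul_nonneg (dState_nonneg M π hπ0 h s) (hπ0 h s a)
        nlinarith [M.r_le_one h s a, M.r_nonneg h s a]
      calc ∑ a, dSA M π h s a * M.r h s a ≤ ∑ a, dSA M π h s a :=
            Finset.sum_le_sum fun a _ => this a
        _ = dState M π h s := by
            unfold dSA; rw [← Finset.mul_sum, hπ, mul_one]
    calc ∑ s, ∑ a, dSA M π h s a * M.r h s a ≤ ∑ s, dState M π h s :=
          Finset.sum_le_sum fun s _ => h1 s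
      _ = 1 := dState_sum M π hπ h
  calc value M π ≤ ∑ _h ∈ Finset.range M.H, (1 : ℝ) :=
        Finset.sum_le_sum fun h _ => hstep h
    _ = (M.H : ℝ) := by simp

lemma bcFromCounts_nonneg (n : ℕ → S → A → ℕ) (h : ℕ) (s : S) (a : A) :
    0 ≤ bcFromCounts n h s a := by
  unfold bcFromCounts
  split
  · positivity
  · positivity

lemma bcFromCounts_sum [Nonempty A] (n : ℕ → S → A → ℕ) (h : ℕ) (s : S) :
    ∑ a, bcFromCounts n h s a = 1 := by
  unfold bcFromCounts
  by_cases hpos : 0 < ∑ a', n h s a'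
  · simp only [if_pos hpos]
    rw [← Finset.sum_div, div_self]
    have : (0 : ℝ) < ∑ a', (n h s a' : ℝ) := by
      rw [← Nat.cast_sum]; exact_mod_cast hpos
    exact ne_of_gt this
  · simp only [if_neg hpos]
    rw [Finset.sum_const, nsmul_eq_mul, Finset.card_univ, mul_one_div, div_self]
    exact_mod_cast Fintype.card_ne_zero

lemma bc_isPolicy [Nonempty A] {H N : ℕ} (D : Dataset S A H N) (keep : Bool → Bool) :
    IsPolicy (bcPolicy D keep) :=
  ⟨fun h s a => bcFromCounts_nonneg _ h s a, fun h s => bcFromCounts_sum _ h s⟩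

/-- L1 state-distribution shift bound. -/
lemma dState_diff (M : MDP S A) (π π' : ℕ → S → A → ℝ)
    (hπ0 : ∀ h s a, 0 ≤ π h s a) (hπ : ∀ h s, ∑ a, π h s a = 1)
    (hπ0' : ∀ h s a, 0 ≤ π' h s a) :
    ∀ h, ∑ s, |dState M π h s - dState M π' h s| ≤
      ∑ t ∈ Finset.range h, ∑ s, dState M π' t s * ∑ a, |π' t s a - π t s a| := by
  intro h
  induction h with
  | zero => simp [dState]
  | succ h ih =>
    have key : ∑ s', |dState M π (h+1) s' - dState M π' (h+1) s'| ≤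
        (∑ s, |dState M π h s - dState M π' h s|) +
          ∑ s, dState M π' h s * ∑ a, |π' h s a - π h s a| := by
      have e1 : ∀ s', |dState M π (h+1) s' - dState M π' (h+1) s'| ≤
          ∑ s, ∑ a, |dState M π h s * π h s a - dState M π' h s * π' h s a| * M.P h s a s' := by
        intro s'
        show |(∑ s, ∑ a, dState M π h s * π h s a * M.P h s a s') -
          (∑ s, ∑ a, dState M π' h s * π' h s a * M.P h s a s')| ≤ _
        rw [← Finset.sum_sub_distrib]
        refine (Finset.abs_sum_le_sum_abs _ _).trans (Finset.sum_le_sum fun s _ => ?_)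
        rw [← Finset.sum_sub_distrib]
        refine (Finset.abs_sum_le_sum_abs _ _).trans (Finset.sum_le_sum fun a _ => ?_)
        rw [← sub_mul, abs_mul, abs_of_nonneg (M.P_nonneg h s a s')]
      calc ∑ s', |dState M π (h+1) s' - dState M π' (h+1) s'|
          ≤ ∑ s', ∑ s, ∑ a, |dState M π h s * π h s a - dState M π' h s * π' h s a| *
              M.P h s a s' := Finset.sum_le_sum fun s' _ => e1 s'
        _ = ∑ s, ∑ a, |dState M π h s * π h s a - dState M π' h s * π' h s a| := by
            rw [Finset.sum_comm]
            refine Finset.sum_congr rfl fun s _ => ?_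
            rw [Finset.sum_comm]
            refine Finset.sum_congr rfl fun a _ => ?_
            rw [← Finset.mul_sum, M.P_sum, mul_one]
        _ ≤ ∑ s, ∑ a, (|dState M π h s - dState M π' h s| * π h s a +
              dState M π' h s * |π h s a - π' h s a|) := by
            refine Finset.sum_le_sum fun s _ => Finset.sum_le_sum fun a _ => ?_
            have : dState M π h s * π h s a - dState M π' h s * π' h s a =
                (dState M π h s - dState M π' h s) * π h s a +
                  dState M π' h s * (π h s a - π' h s a) := by ring
            rw [this]
            refine (abs_add_le _ _).trans ?_
            rw [abs_mul, abs_mul, abs_of_nonneg (hπ0 h s a),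
              abs_of_nonneg (dState_nonneg M π' hπ0' h s)]
        _ = (∑ s, |dState M π h s - dState M π' h s|) +
              ∑ s, dState M π' h s * ∑ a, |π' h s a - π h s a| := by
            rw [← Finset.sum_add_distrib]
            refine Finset.sum_congr rfl fun s _ => ?_
            rw [Finset.sum_add_distrib, ← Finset.mul_sum, hπ, mul_one, ← Finset.mul_sum]
            congr 1
            congr 1
            exact Finset.sum_congr rfl fun a _ => abs_sub_comm _ _
    calc ∑ s', |dState M π (h+1) s' - dState M π' (h+1) s'|
        ≤ (∑ s, |dState M π h s - dState M π' h s|) +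
            ∑ s, dState M π' h s * ∑ a, |π' h s a - π h s a| := key
      _ ≤ (∑ t ∈ Finset.range h, ∑ s, dState M π' t s * ∑ a, |π' t s a - π t s a|) +
            ∑ s, dState M π' h s * ∑ a, |π' h s a - π h s a| := by linarith [ih]
      _ = ∑ t ∈ Finset.range (h+1), ∑ s, dState M π' t s * ∑ a, |π' t s a - π t s a| := by
          rw [Finset.sum_range_succ]

/-- Performance-difference bound via L1 policy errors under the expert distribution. -/
lemma value_diff (M : MDP S A) (π π' : ℕ → S → A → ℝ)
    (hπ0 : ∀ h s a, 0 ≤ π h s a) (hπ : ∀ h s, ∑ a, π h s a = 1)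
    (hπ0' : ∀ h s a, 0 ≤ π' h s a) (hπ' : ∀ h s, ∑ a, π' h s a = 1) :
    value M π' - value M π ≤
      (M.H : ℝ) * ∑ t ∈ Finset.range M.H, ∑ s, dState M π' t s * ∑ a, |π' t s a - π t s a| := by
  set err : ℕ → ℝ := fun t => ∑ s, dState M π' t s * ∑ a, |π' t s a - π t s a| with herr
  have herrnn : ∀ t, 0 ≤ err t := by
    intro t
    refine Finset.sum_nonneg fun s _ => mul_nonneg (dState_nonneg M π' hπ0' t s)
      (Finset.sum_nonneg fun a _ => abs_nonneg _)
  have hstep : ∀ h, h < M.H →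
      (∑ s, ∑ a, dSA M π' h s a * M.r h s a) - (∑ s, ∑ a, dSA M π h s a * M.r h s a) ≤
        (∑ t ∈ Finset.range h, err t) + err h := by
    intro h _
    have e1 : (∑ s, ∑ a, dSA M π' h s a * M.r h s a) - (∑ s, ∑ a, dSA M π h s a * M.r h s a)
        ≤ ∑ s, ∑ a, |dState M π' h s * π' h s a - dState M π h s * π h s a| := by
      rw [← Finset.sum_sub_distrib]
      refine Finset.sum_le_sum fun s _ => ?_
      rw [← Finset.sum_sub_distrib]
      refine Finset.sum_le_sum fun a _ => ?_
      unfold dSA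
      rw [← sub_mul]
      calc (dState M π' h s * π' h s a - dState M π h s * π h s a) * M.r h s a
          ≤ |dState M π' h s * π' h s a - dState M π h s * π h s a| * M.r h s a := by
            exact mul_le_mul_of_nonneg_right (le_abs_self _) (M.r_nonneg h s a)
        _ ≤ |dState M π' h s * π' h s a - dState M π h s * π h s a| * 1 := by
            exact mul_le_mul_of_nonneg_left (M.r_le_one h s a) (abs_nonneg _)
        _ = |dState M π' h s * π' h s a - dState M π h s * π h s a| := mul_one _
    have e2 : ∑ s, ∑ a, |dState M π' h s * π' h s a - dState M π h s * π h s a| ≤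
        (∑ s, |dState M π h s - dState M π' h s|) + err h := by
      calc ∑ s, ∑ a, |dState M π' h s * π' h s a - dState M π h s * π h s a|
          ≤ ∑ s, ∑ a, (dState M π' h s * |π' h s a - π h s a| +
              |dState M π' h s - dState M π h s| * π h s a) := by
            refine Finset.sum_le_sum fun s _ => Finset.sum_le_sum fun a _ => ?_
            have : dState M π' h s * π' h s a - dState M π h s * π h s a =
                dState M π' h s * (π' h s a - π h s a) +
                  (dState M π' h s - dState M π h s) * π h s a := by ring
            rw [this]
            refine (abs_add_le _ _).trans ?_
            rw [abs_mul, abs_mul, abs_of_nonneg (hπ0 h s a),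
              abs_of_nonneg (dState_nonneg M π' hπ0' h s)]
        _ = err h + ∑ s, |dState M π' h s - dState M π h s| := by
            simp only [herr]
            rw [← Finset.sum_add_distrib]
            refine Finset.sum_congr rfl fun s _ => ?_
            rw [Finset.sum_add_distrib, ← Finset.mul_sum, ← Finset.mul_sum, hπ, mul_one]
        _ = (∑ s, |dState M π h s - dState M π' h s|) + err h := by
            rw [add_comm]
            congr 1
            exact Finset.sum_congr rfl fun s _ => abs_sub_comm _ _
    have e3 := dState_diff M π π' hπ0 hπ hπ0' h
    calc (∑ s, ∑ a, dSA M π' h s a * M.r h s a) - (∑ s, ∑ a, dSA M π h s a * M.r h s a)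
        ≤ (∑ s, |dState M π h s - dState M π' h s|) + err h := e1.trans e2
      _ ≤ (∑ t ∈ Finset.range h, err t) + err h := by linarith
  have hperh : ∀ h ∈ Finset.range M.H,
      (∑ s, ∑ a, dSA M π' h s a * M.r h s a) - (∑ s, ∑ a, dSA M π h s a * M.r h s a) ≤
        ∑ t ∈ Finset.range M.H, err t := by
    intro h hmem
    rw [Finset.mem_range] at hmem
    refine (hstep h hmem).trans ?_
    have : (∑ t ∈ Finset.range h, err t) + err h = ∑ t ∈ Finset.range (h+1), err t := by
      rw [Finset.sum_range_succ]
    rw [this]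
    exact Finset.sum_le_sum_of_subset_of_nonneg
      (Finset.range_subset_range.2 hmem) (fun t _ _ => herrnn t)
  calc value M π' - value M π
      = ∑ h ∈ Finset.range M.H,
          ((∑ s, ∑ a, dSA M π' h s a * M.r h s a) - (∑ s, ∑ a, dSA M π h s a * M.r h s a)) := by
        unfold value; rw [← Finset.sum_sub_distrib]
    _ ≤ ∑ _h ∈ Finset.range M.H, ∑ t ∈ Finset.range M.H, err t :=
        Finset.sum_le_sum hperh
    _ = (M.H : ℝ) * ∑ t ∈ Finset.range M.H, err t := by
        rw [Finset.sum_const, Finset.card_range, nsmul_eq_mul]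

end BCAux3
section BCAux4
set_option linter.unusedSectionVars false

variable {S A : Type} [Fintype S] [Fintype A] [DecidableEq S] [DecidableEq A]

/-- A dataset is *good* for expert action map `f` if every expert-labeled trajectory always
takes the expert action. -/
def goodD {H N : ℕ} (f : ℕ → S → A) (D : Dataset S A H N) : Prop :=
  ∀ i, (D i).2 = true → ∀ h : Fin H, ((D i).1 h).2 = f h ((D i).1 h).1

lemma datasetProb_pos_good (M : MDP S A) (πE πβ : ℕ → S → A → ℝ) (η : ℝ) {N : ℕ}
    (f : ℕ → S → A) (hf : ∀ h s a, πE h s a = if a = f h s then 1 else 0)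
    (D : Dataset S A M.H N) (hD : datasetProb M πE πβ η D ≠ 0) : goodD f D := by
  intro i hi h
  by_contra hbad
  apply hD
  unfold datasetProb
  refine Finset.prod_eq_zero (Finset.mem_univ i) ?_
  rw [hi]
  simp only [if_true]
  have : trajProb M πE (D i).1 = 0 := by
    unfold trajProb
    refine Finset.prod_eq_zero (Finset.mem_univ h) ?_
    rw [hf]
    rw [if_neg hbad]
    ring
  rw [this, mul_zero]

lemma count_zero_iff {H N : ℕ} (D : Dataset S A H N) (k : Bool → Bool) (h : ℕ) (hh : h < H)
    (s : S) :
    (∑ a, countSA D k h s a = 0) ↔ ∀ i, k (D i).2 = true → ((D i).1 ⟨h, hh⟩).1 ≠ s := by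
  rw [Finset.sum_eq_zero_iff]
  constructor
  · intro hall i hki hs
    have := hall ((D i).1 ⟨h, hh⟩).2 (Finset.mem_univ _)
    rw [countSA, Finset.card_eq_zero, Finset.filter_eq_empty_iff] at this
    refine this (Finset.mem_univ i) ?_
    rw [Bool.and_eq_true, hki]
    refine ⟨rfl, ?_⟩
    unfold hit
    rw [dif_pos hh]
    simp [Prod.ext_iff, hs]
  · intro hno a _
    rw [countSA, Finset.card_eq_zero, Finset.filter_eq_empty_iff]
    intro i _ hmem
    rw [Bool.and_eq_true] at hmem
    obtain ⟨h1, h2⟩ := hmem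
    unfold hit at h2
    rw [dif_pos hh] at h2
    simp only [decide_eq_true_eq] at h2
    exact hno i h1 (by rw [h2])

/-- On a good dataset, BC agrees with the deterministic expert at every visited state. -/
lemma bc_eq_expert (M : MDP S A) {N : ℕ} (πE : ℕ → S → A → ℝ)
    (f : ℕ → S → A) (hf : ∀ h s a, πE h s a = if a = f h s then 1 else 0)
    (D : Dataset S A M.H N) (hgood : goodD f D) (h : ℕ) (hh : h < M.H) (s : S)
    (hpos : ∑ a, countSA D (fun b => b) h s a ≠ 0) (a : A) :
    bcPolicy D (fun b => b) h s a = πE h s a := by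
  have hc0 : ∀ a', a' ≠ f h s → countSA D (fun b => b) h s a' = 0 := by
    intro a' ha'
    rw [countSA, Finset.card_eq_zero, Finset.filter_eq_empty_iff]
    intro i _ hmem
    rw [Bool.and_eq_true] at hmem
    obtain ⟨h1, h2⟩ := hmem
    unfold hit at h2
    rw [dif_pos hh] at h2
    simp only [decide_eq_true_eq] at h2
    have := hgood i h1 ⟨h, hh⟩
    rw [h2] at this
    exact ha' this
  have hsum : ∑ a', countSA D (fun b => b) h s a' = countSA D (fun b => b) h s (f h s) := by
    rw [Finset.sum_eq_single (f h s)]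
    · intro b _ hb; exact hc0 b hb
    · intro hb; exact absurd (Finset.mem_univ _) hb
  have hposn : 0 < ∑ a', countSA D (fun b => b) h s a' := Nat.pos_of_ne_zero hpos
  show bcFromCounts _ h s a = _
  unfold bcFromCounts
  rw [if_pos hposn, hf]
  show (countSA D (fun b => b) h s a : ℝ) / (∑ a', (countSA D (fun b => b) h s a' : ℝ)) = _
  by_cases ha : a = f h s
  · rw [if_pos ha, ← Nat.cast_sum, hsum, ha, div_self]
    have hne : countSA D (fun b => b) h s (f h s) ≠ 0 := by omega
    exact_mod_cast hne
  · rw [if_neg ha, hc0 a ha]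
    simp

/-- L1 error of BC against the deterministic expert, bounded by the miss indicator. -/
lemma bc_L1_bound [Nonempty A] (M : MDP S A) {N : ℕ} (πE : ℕ → S → A → ℝ)
    (hπE : IsPolicy πE) (f : ℕ → S → A) (hf : ∀ h s a, πE h s a = if a = f h s then 1 else 0)
    (D : Dataset S A M.H N) (hgood : goodD f D) (h : ℕ) (hh : h < M.H) (s : S) :
    ∑ a, |πE h s a - bcPolicy D (fun b => b) h s a| ≤
      2 * (if ∑ a, countSA D (fun b => b) h s a = 0 then (1 : ℝ) else 0) := by
  by_cases h0 : ∑ a, countSA D (fun b => b) h s a = 0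
  · rw [if_pos h0]
    calc ∑ a, |πE h s a - bcPolicy D (fun b => b) h s a|
        ≤ ∑ a, (πE h s a + bcPolicy D (fun b => b) h s a) := by
          refine Finset.sum_le_sum fun a _ => ?_
          refine (abs_sub _ _).trans ?_
          rw [abs_of_nonneg (hπE.1 h s a), abs_of_nonneg ((bc_isPolicy D _).1 h s a)]
      _ = 2 := by
          rw [Finset.sum_add_distrib, hπE.2 h s, (bc_isPolicy D _).2 h s]
          norm_num
      _ = 2 * 1 := by ring
  · rw [if_neg h0, mul_zero]
    have : ∀ a, |πE h s a - bcPolicy D (fun b => b) h s a| = 0 := by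
      intro a
      rw [bc_eq_expert M πE f hf D hgood h hh s h0 a, sub_self, abs_zero]
    rw [Finset.sum_congr rfl fun a _ => this a]
    simp

/-- factorization of expectations of products over independent trajectories. -/
lemma sum_prod_fun {Z : Type} [Fintype Z] (N : ℕ) (w : Z → ℝ) :
    ∑ D : Fin N → Z, ∏ i, w (D i) = (∑ z, w z) ^ N := by
  have key := Finset.prod_univ_sum (fun _ : Fin N => (Finset.univ : Finset Z)) (fun _ z => w z)
  rw [Fintype.piFinset_univ] at key
  rw [← key, Finset.prod_const, Finset.card_univ, Fintype.card_fin]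

lemma datasetProb_nonneg (M : MDP S A) (πE πβ : ℕ → S → A → ℝ)
    (hπE : ∀ h s a, 0 ≤ πE h s a) (hπβ : ∀ h s a, 0 ≤ πβ h s a) (η : ℝ)
    (hη0 : 0 ≤ η) (hη1 : η ≤ 1) {N : ℕ} (D : Dataset S A M.H N) :
    0 ≤ datasetProb M πE πβ η D := by
  refine Finset.prod_nonneg fun i _ => ?_
  split
  · exact mul_nonneg hη0 (trajProb_nonneg M πE hπE _)
  · exact mul_nonneg (by linarith) (trajProb_nonneg M πβ hπβ _)

lemma sum_datasetProb (M : MDP S A) (πE πβ : ℕ → S → A → ℝ)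
    (hπE : ∀ h s, ∑ a, πE h s a = 1) (hπβ : ∀ h s, ∑ a, πβ h s a = 1) (η : ℝ) {N : ℕ} :
    ∑ D : Dataset S A M.H N, datasetProb M πE πβ η D = 1 := by
  have key : (∑ D : Dataset S A M.H N, datasetProb M πE πβ η D) =
      (∑ z : (Fin M.H → S × A) × Bool,
        if z.2 then η * trajProb M πE z.1 else (1 - η) * trajProb M πβ z.1) ^ N :=
    sum_prod_fun N (fun z : (Fin M.H → S × A) × Bool =>
      if z.2 then η * trajProb M πE z.1 else (1 - η) * trajProb M πβ z.1)
  rw [key]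
  have : ∑ z : (Fin M.H → S × A) × Bool,
      (if z.2 then η * trajProb M πE z.1 else (1 - η) * trajProb M πβ z.1) = 1 := by
    rw [Fintype.sum_prod_type]
    have e : ∀ tr : Fin M.H → S × A, ∑ b : Bool,
        (if b then η * trajProb M πE tr else (1 - η) * trajProb M πβ tr) =
        η * trajProb M πE tr + (1 - η) * trajProb M πβ tr := by
      intro tr
      rw [Fintype.sum_bool]
      simp
    rw [Finset.sum_congr rfl fun tr _ => e tr, Finset.sum_add_distrib,
      ← Finset.mul_sum, ← Finset.mul_sum, sum_trajProb M πE hπE, sum_trajProb M πβ hπβ]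
    ring
  rw [this, one_pow]

/-- Expected value of the miss indicator. -/
lemma expect_miss (M : MDP S A) (πE πβ : ℕ → S → A → ℝ)
    (hπE : ∀ h s, ∑ a, πE h s a = 1) (hπβ : ∀ h s, ∑ a, πβ h s a = 1)
    (η : ℝ) (N : ℕ) (h : ℕ) (hh : h < M.H) (s : S) :
    ∑ D : Dataset S A M.H N, datasetProb M πE πβ η D *
        (if ∑ a, countSA D (fun b => b) h s a = 0 then (1 : ℝ) else 0)
      = (1 - η * dState M πE h s) ^ N := by
  have hind : ∀ D : Dataset S A M.H N,
      (if ∑ a, countSA D (fun b => b) h s a = 0 then (1 : ℝ) else 0) =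
      ∏ i, (if (D i).2 = true ∧ ((D i).1 ⟨h, hh⟩).1 = s then (0 : ℝ) else 1) := by
    intro D
    by_cases h0 : ∑ a, countSA D (fun b => b) h s a = 0
    · rw [if_pos h0]
      rw [count_zero_iff D _ h hh s] at h0
      symm
      refine Finset.prod_eq_one fun i _ => ?_
      rw [if_neg]
      rintro ⟨h1, h2⟩
      exact h0 i h1 h2
    · rw [if_neg h0]
      rw [count_zero_iff D _ h hh s] at h0
      push_neg at h0
      obtain ⟨i, h1, h2⟩ := h0
      symm
      exact Finset.prod_eq_zero (Finset.mem_univ i) (by rw [if_pos ⟨h1, h2⟩])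
  have step : ∀ D : Dataset S A M.H N, datasetProb M πE πβ η D *
      (if ∑ a, countSA D (fun b => b) h s a = 0 then (1 : ℝ) else 0) =
      ∏ i, ((if (D i).2 then η * trajProb M πE (D i).1 else (1 - η) * trajProb M πβ (D i).1) *
        (if (D i).2 = true ∧ ((D i).1 ⟨h, hh⟩).1 = s then (0 : ℝ) else 1)) := by
    intro D
    rw [hind D, Finset.prod_mul_distrib]
    rfl
  have key : (∑ D : Dataset S A M.H N, ∏ i,
      ((if (D i).2 then η * trajProb M πE (D i).1 else (1 - η) * trajProb M πβ (D i).1) *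
        (if (D i).2 = true ∧ ((D i).1 ⟨h, hh⟩).1 = s then (0 : ℝ) else 1))) =
      (∑ z : (Fin M.H → S × A) × Bool,
        ((if z.2 then η * trajProb M πE z.1 else (1 - η) * trajProb M πβ z.1) *
          (if z.2 = true ∧ (z.1 ⟨h, hh⟩).1 = s then (0 : ℝ) else 1))) ^ N :=
    sum_prod_fun N (fun z : (Fin M.H → S × A) × Bool =>
      (if z.2 then η * trajProb M πE z.1 else (1 - η) * trajProb M πβ z.1) *
        (if z.2 = true ∧ (z.1 ⟨h, hh⟩).1 = s then (0 : ℝ) else 1))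
  rw [Finset.sum_congr rfl fun D _ => step D, key]
  congr 1
  rw [Fintype.sum_prod_type]
  have e : ∀ tr : Fin M.H → S × A, ∑ b : Bool,
      ((if b then η * trajProb M πE tr else (1 - η) * trajProb M πβ tr) *
        (if b = true ∧ (tr ⟨h, hh⟩).1 = s then (0 : ℝ) else 1)) =
      η * trajProb M πE tr * (if (tr ⟨h, hh⟩).1 = s then (0:ℝ) else 1) +
        (1 - η) * trajProb M πβ tr := by
    intro tr
    rw [Fintype.sum_bool]
    by_cases hs : (tr ⟨h, hh⟩).1 = s
    · simp [hs]
    · simp [hs]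
  rw [Finset.sum_congr rfl fun tr _ => e tr, Finset.sum_add_distrib, ← Finset.mul_sum,
    sum_trajProb M πβ hπβ, mul_one]
  have e2 : ∀ tr : Fin M.H → S × A,
      η * trajProb M πE tr * (if (tr ⟨h, hh⟩).1 = s then (0:ℝ) else 1) =
      η * (trajProb M πE tr * (fun p : S × A => if p.1 = s then (0:ℝ) else 1) (tr ⟨h, hh⟩)) := by
    intro tr; ring
  rw [Finset.sum_congr rfl fun tr _ => e2 tr, ← Finset.mul_sum,
    traj_marginal M πE hπE h hh (fun p => if p.1 = s then (0:ℝ) else 1)]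
  have e3 : ∑ s', ∑ a, dState M πE h s' * πE h s' a *
      (fun p : S × A => if p.1 = s then (0:ℝ) else 1) (s', a) = 1 - dState M πE h s := by
    have e4 : ∀ s', ∑ a, dState M πE h s' * πE h s' a *
        (fun p : S × A => if p.1 = s then (0:ℝ) else 1) (s', a) =
        dState M πE h s' * (if s' = s then (0:ℝ) else 1) := by
      intro s'
      show ∑ a, dState M πE h s' * πE h s' a * (if s' = s then (0:ℝ) else 1) = _
      rw [← Finset.sum_mul, ← Finset.mul_sum, hπE, mul_one]
    rw [Finset.sum_congr rfl fun s' _ => e4 s']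
    have e5 : ∀ s', dState M πE h s' * (if s' = s then (0:ℝ) else 1) =
        dState M πE h s' - (if s' = s then dState M πE h s' else 0) := by
      intro s'; split <;> ring
    rw [Finset.sum_congr rfl fun s' _ => e5 s', Finset.sum_sub_distrib,
      Finset.sum_ite_eq' Finset.univ s (fun s' => dState M πE h s'),
      if_pos (Finset.mem_univ s), dState_sum M πE hπE h]
  rw [e3]
  ring

end BCAux4
section BCAux5
set_option linter.unusedSectionVars false

variable {S A : Type} [Fintype S] [Fintype A] [DecidableEq S] [DecidableEq A]

lemma miss_bound (η p : ℝ) (hη0 : 0 < η) (hη1 : η ≤ 1) (hp0 : 0 ≤ p) (hp1 : p ≤ 1)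
    (N : ℕ) (hN : 0 < N) : p * (1 - η * p) ^ N ≤ 1 / (η * N) := by
  have hx0 : 0 ≤ η * p := mul_nonneg hη0.le hp0
  have hx1 : η * p ≤ 1 := by nlinarith
  have hpow0 : (0:ℝ) ≤ (1 - η * p) ^ N := pow_nonneg (by linarith) N
  have hber : 1 + (N:ℝ) * (η * p) ≤ (1 + η * p) ^ N := one_add_mul_le_pow (by linarith) N
  have h1 : (1 - η * p) ^ N * (1 + (N:ℝ) * (η * p)) ≤ 1 := by
    calc (1 - η * p) ^ N * (1 + (N:ℝ) * (η * p))
        ≤ (1 - η * p) ^ N * (1 + η * p) ^ N := mul_le_mul_of_nonneg_left hber hpow0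
      _ = ((1 - η * p) * (1 + η * p)) ^ N := (mul_pow _ _ N).symm
      _ = (1 - (η * p) ^ 2) ^ N := by congr 1; ring
      _ ≤ 1 := pow_le_one₀ (by nlinarith) (by nlinarith)
  have hηN : (0:ℝ) < η * N := mul_pos hη0 (by exact_mod_cast hN)
  rw [le_div_iff₀ hηN]
  calc p * (1 - η * p) ^ N * (η * N) = (1 - η * p) ^ N * ((N:ℝ) * (η * p)) := by ring
    _ ≤ (1 - η * p) ^ N * (1 + (N:ℝ) * (η * p)) := by
        refine mul_le_mul_of_nonneg_left ?_ hpow0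
        have : (0:ℝ) ≤ (N:ℝ) * (η * p) := mul_nonneg (Nat.cast_nonneg N) hx0
        linarith
    _ ≤ 1 := h1

/-- The indicator that state `s` is unvisited at step `h` in the expert dataset. -/
noncomputable def missInd {H N : ℕ} (D : Dataset S A H N) (h : ℕ) (s : S) : ℝ :=
  if ∑ a, countSA D (fun b => b) h s a = 0 then 1 else 0

lemma bc_L1_bound' [Nonempty A] (M : MDP S A) {N : ℕ} (πE : ℕ → S → A → ℝ)
    (hπE : IsPolicy πE) (f : ℕ → S → A) (hf : ∀ h s a, πE h s a = if a = f h s then 1 else 0)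
    (D : Dataset S A M.H N) (hgood : goodD f D) (h : ℕ) (hh : h < M.H) (s : S) :
    ∑ a, |πE h s a - bcPolicy D (fun b => b) h s a| ≤ 2 * missInd D h s := by
  unfold missInd
  exact bc_L1_bound M πE hπE f hf D hgood h hh s

lemma expect_miss' (M : MDP S A) (πE πβ : ℕ → S → A → ℝ)
    (hπE : ∀ h s, ∑ a, πE h s a = 1) (hπβ : ∀ h s, ∑ a, πβ h s a = 1)
    (η : ℝ) (N : ℕ) (h : ℕ) (hh : h < M.H) (s : S) :
    ∑ D : Dataset S A M.H N, datasetProb M πE πβ η D * missInd D h s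
      = (1 - η * dState M πE h s) ^ N := by
  unfold missInd
  exact expect_miss M πE πβ hπE hπβ η N h hh s

end BCAux5
/-- **Theorem 1 (BC on the expert dataset).**
Under Assumption 1 with `η ∈ (0,1]`, the behavioral cloning policy `π^BC` trained on the
expert dataset `D^E` satisfies
`E[V(π^E) − V(π^BC)] ≤ min{H, 2|S|H²/(η N_tot)}`,
where the expectation is over the randomness of the dataset collection. -/
theorem bc_expert_imitation_gap
    (M : MDP S A) (πE πβ : ℕ → S → A → ℝ)
    (hπE : IsPolicy πE) (hdet : IsDetPolicy πE) (hπβ : IsPolicy πβ)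
    (η : ℝ) (hη : η ∈ Set.Ioc (0 : ℝ) 1) (Ntot : ℕ) (hN : 0 < Ntot) :
    expect M πE πβ η Ntot
        (fun D => value M πE - value M (bcPolicy D (fun b => b)))
      ≤ min (M.H : ℝ) (2 * (Fintype.card S : ℝ) * (M.H : ℝ) ^ 2 / (η * Ntot)) := by
  obtain ⟨hη0, hη1⟩ := hη
  obtain ⟨f, hf⟩ := hdet
  have hS : Nonempty S := by
    by_contra hS
    rw [not_nonempty_iff] at hS
    have := M.ρ_sum
    rw [Finset.univ_eq_empty, Finset.sum_empty] at this
    norm_num at this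
  have hA : Nonempty A := by
    by_contra hA
    rw [not_nonempty_iff] at hA
    have := hπE.2 0 (Classical.choice hS)
    rw [Finset.univ_eq_empty, Finset.sum_empty] at this
    norm_num at this
  have hbc : ∀ D : Dataset S A M.H Ntot, IsPolicy (bcPolicy D (fun b => b)) :=
    fun D => bc_isPolicy D _
  have hprob_nn : ∀ D : Dataset S A M.H Ntot, 0 ≤ datasetProb M πE πβ η D :=
    fun D => datasetProb_nonneg M πE πβ hπE.1 hπβ.1 η hη0.le hη1 D
  have hsum1 : ∑ D : Dataset S A M.H Ntot, datasetProb M πE πβ η D = 1 :=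
    sum_datasetProb M πE πβ hπE.2 hπβ.2 η
  refine le_min ?_ ?_
  · -- bound by H
    show (∑ D : Dataset S A M.H Ntot, datasetProb M πE πβ η D *
      (value M πE - value M (bcPolicy D (fun b => b)))) ≤ (M.H : ℝ)
    calc ∑ D : Dataset S A M.H Ntot, datasetProb M πE πβ η D *
          (value M πE - value M (bcPolicy D (fun b => b)))
        ≤ ∑ D : Dataset S A M.H Ntot, datasetProb M πE πβ η D * (M.H : ℝ) := by
          refine Finset.sum_le_sum fun D _ => mul_le_mul_of_nonneg_left ?_ (hprob_nn D)
          have h1 := value_le M πE hπE.1 hπE.2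
          have h2 := value_nonneg M (bcPolicy D (fun b => b)) (hbc D).1
          linarith
      _ = (M.H : ℝ) := by rw [← Finset.sum_mul, hsum1, one_mul]
  · -- main bound
    show (∑ D : Dataset S A M.H Ntot, datasetProb M πE πβ η D *
      (value M πE - value M (bcPolicy D (fun b => b)))) ≤
        2 * (Fintype.card S : ℝ) * (M.H : ℝ) ^ 2 / (η * Ntot)
    have step1 : ∀ D : Dataset S A M.H Ntot, datasetProb M πE πβ η D ≠ 0 →
        value M πE - value M (bcPolicy D (fun b => b)) ≤
          2 * (M.H : ℝ) * ∑ t ∈ Finset.range M.H, ∑ s, dState M πE t s * missInd D t s := by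
      intro D hD
      have hgood := datasetProb_pos_good M πE πβ η f hf D hD
      have h1 := value_diff M (bcPolicy D (fun b => b)) πE (hbc D).1 (hbc D).2 hπE.1 hπE.2
      refine h1.trans ?_
      have h2 : ∀ t ∈ Finset.range M.H,
          ∑ s, dState M πE t s * ∑ a, |πE t s a - bcPolicy D (fun b => b) t s a| ≤
            ∑ s, dState M πE t s * (2 * missInd D t s) := by
        intro t ht
        refine Finset.sum_le_sum fun s _ => mul_le_mul_of_nonneg_left
          (bc_L1_bound' M πE hπE f hf D hgood t (Finset.mem_range.mp ht) s)
          (dState_nonneg M πE hπE.1 t s)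
      calc (M.H : ℝ) * ∑ t ∈ Finset.range M.H, ∑ s, dState M πE t s *
            ∑ a, |πE t s a - bcPolicy D (fun b => b) t s a|
          ≤ (M.H : ℝ) * ∑ t ∈ Finset.range M.H, ∑ s, dState M πE t s * (2 * missInd D t s) :=
            mul_le_mul_of_nonneg_left (Finset.sum_le_sum h2) (Nat.cast_nonneg M.H)
        _ = 2 * (M.H : ℝ) * ∑ t ∈ Finset.range M.H, ∑ s, dState M πE t s * missInd D t s := by
            simp only [Finset.mul_sum]
            exact Finset.sum_congr rfl fun t _ => Finset.sum_congr rfl fun s _ => by ring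
    have hBnn : ∀ D : Dataset S A M.H Ntot,
        0 ≤ 2 * (M.H : ℝ) * ∑ t ∈ Finset.range M.H, ∑ s, dState M πE t s * missInd D t s := by
      intro D
      refine mul_nonneg (by positivity) (Finset.sum_nonneg fun t _ =>
        Finset.sum_nonneg fun s _ => mul_nonneg (dState_nonneg M πE hπE.1 t s) ?_)
      unfold missInd; split <;> norm_num
    calc ∑ D : Dataset S A M.H Ntot, datasetProb M πE πβ η D *
          (value M πE - value M (bcPolicy D (fun b => b)))
        ≤ ∑ D : Dataset S A M.H Ntot, datasetProb M πE πβ η D *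
            (2 * (M.H : ℝ) * ∑ t ∈ Finset.range M.H, ∑ s, dState M πE t s * missInd D t s) := by
          refine Finset.sum_le_sum fun D _ => ?_
          by_cases hD : datasetProb M πE πβ η D = 0
          · rw [hD, zero_mul, zero_mul]
          · exact mul_le_mul_of_nonneg_left (step1 D hD) (hprob_nn D)
      _ = 2 * (M.H : ℝ) * ∑ t ∈ Finset.range M.H, ∑ s, dState M πE t s *
            ∑ D : Dataset S A M.H Ntot, datasetProb M πE πβ η D * missInd D t s := by
          simp only [Finset.mul_sum]
          rw [Finset.sum_comm]
          refine Finset.sum_congr rfl fun t _ => ?_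
          rw [Finset.sum_comm]
          exact Finset.sum_congr rfl fun s _ => Finset.sum_congr rfl fun D _ => by ring
      _ = 2 * (M.H : ℝ) * ∑ t ∈ Finset.range M.H, ∑ s,
            dState M πE t s * (1 - η * dState M πE t s) ^ Ntot := by
          congr 1
          refine Finset.sum_congr rfl fun t ht => Finset.sum_congr rfl fun s _ => ?_
          rw [expect_miss' M πE πβ hπE.2 hπβ.2 η Ntot t (Finset.mem_range.mp ht) s]
      _ ≤ 2 * (M.H : ℝ) * ∑ _t ∈ Finset.range M.H, ∑ _s : S, 1 / (η * Ntot) := by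
          refine mul_le_mul_of_nonneg_left (Finset.sum_le_sum fun t _ =>
            Finset.sum_le_sum fun s _ => ?_) (by positivity)
          exact miss_bound η (dState M πE t s) hη0 hη1 (dState_nonneg M πE hπE.1 t s)
            (dState_le_one M πE hπE.1 hπE.2 t s) Ntot hN
      _ = 2 * (Fintype.card S : ℝ) * (M.H : ℝ) ^ 2 / (η * Ntot) := by
          rw [Finset.sum_const, Finset.sum_const, Finset.card_univ, Finset.card_range,
            nsmul_eq_mul, nsmul_eq_mul]
          have hηN : (η * (Ntot : ℝ)) ≠ 0 := by positivity
          field_simp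
end

section
/- Under the dataset collection assumption with the additional assumption that the behavior policy equals the expert policy (π^β = π^E), for any η ∈ [0,1] the NBCU policy π^NBCU (the BC policy of the union dataset D^U) satisfies E[V(π^E) − V(π^NBCU)] ≤ min{H, (4/9)|S|H²/N_tot}, where the expectation is over the randomness of the dataset collection. -/
open Finset

variable {S A : Type} [Fintype S] [Fintype A] [DecidableEq S] [DecidableEq A]

namespace NBCU

variable {S A : Type} [Fintype S] [Fintype A] [DecidableEq S] [DecidableEq A]

lemma cons_mk_succ {α : Type*} {n : ℕ} (x : α) (t : Fin n → α) (i : ℕ) (h : i + 1 < n + 1) :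
    (Fin.cons x t : Fin (n+1) → α) ⟨i + 1, h⟩ = t ⟨i, Nat.lt_of_succ_lt_succ h⟩ := by
  rw [show (⟨i+1,h⟩ : Fin (n+1)) = (⟨i, Nat.lt_of_succ_lt_succ h⟩ : Fin n).succ from rfl,
    Fin.cons_succ]

noncomputable def pcK (M : MDP S A) (π : ℕ → S → A → ℝ) (h0 n : ℕ) (tr : Fin n → S × A) : ℝ :=
  ∏ i : Fin n, (π (h0 + i) (tr i).1 (tr i).2 *
    (if hh : (i : ℕ) + 1 < n then M.P (h0 + i) (tr i).1 (tr i).2 (tr ⟨(i : ℕ) + 1, hh⟩).1 else 1))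

noncomputable def dGen (M : MDP S A) (π : ℕ → S → A → ℝ) (μ : S → ℝ) (h0 : ℕ) : ℕ → S → ℝ
  | 0 => μ
  | k + 1 => fun s' => ∑ s, ∑ a, dGen M π μ h0 k s * π (h0 + k) s a * M.P (h0 + k) s a s'

lemma pcK_cons (M : MDP S A) (π : ℕ → S → A → ℝ) (h0 n : ℕ) (x : S × A)
    (tail : Fin (n + 1) → S × A) :
    pcK M π h0 (n + 2) (Fin.cons x tail) =
      π h0 x.1 x.2 * M.P h0 x.1 x.2 (tail 0).1 * pcK M π (h0 + 1) (n + 1) tail := by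
  rw [pcK, pcK, Fin.prod_univ_succ]
  congr 1
  · refine Finset.prod_congr rfl fun i _ => ?_
    simp only [Fin.cons_succ, Fin.val_succ]
    rw [show h0 + ((i:ℕ)+1) = h0 + 1 + (i:ℕ) by omega]
    congr 1
    by_cases hh : (i:ℕ) + 1 < n + 1
    · rw [dif_pos (by omega : (i:ℕ)+1+1 < n+2), dif_pos hh, cons_mk_succ]
    · rw [dif_neg (by omega), dif_neg hh]

lemma sum_swap4 {α β γ δ : Type*} [Fintype α] [Fintype β] [Fintype γ] [Fintype δ]
    (F : α → β → γ → δ → ℝ) :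
    ∑ a, ∑ b, ∑ c, ∑ d, F a b c d = ∑ c, ∑ d, ∑ a, ∑ b, F a b c d := by
  calc ∑ a, ∑ b, ∑ c, ∑ d, F a b c d
      = ∑ x : α × β, ∑ y : γ × δ, F x.1 x.2 y.1 y.2 := by
        rw [Fintype.sum_prod_type]
        exact Finset.sum_congr rfl fun a _ => Finset.sum_congr rfl fun b _ => by
          rw [Fintype.sum_prod_type]
    _ = ∑ y : γ × δ, ∑ x : α × β, F x.1 x.2 y.1 y.2 := Finset.sum_comm
    _ = ∑ c, ∑ d, ∑ a, ∑ b, F a b c d := by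
        rw [Fintype.sum_prod_type]
        exact Finset.sum_congr rfl fun c _ => Finset.sum_congr rfl fun d _ => by
          rw [Fintype.sum_prod_type]

lemma dGen_step (M : MDP S A) (π : ℕ → S → A → ℝ) :
    ∀ (j h0 : ℕ) (μ : S → ℝ) (s : S),
      dGen M π μ h0 (j + 1) s =
        ∑ s0, ∑ a0, μ s0 * π h0 s0 a0 * dGen M π (M.P h0 s0 a0) (h0 + 1) j s := by
  intro j
  induction j with
  | zero => intro h0 μ s; simp [dGen]
  | succ j ih =>
    intro h0 μ s
    show (∑ s1, ∑ a1, dGen M π μ h0 (j+1) s1 * π (h0 + (j+1)) s1 a1 * M.P (h0 + (j+1)) s1 a1 s)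
      = _
    calc ∑ s1, ∑ a1, dGen M π μ h0 (j+1) s1 * π (h0 + (j+1)) s1 a1 * M.P (h0 + (j+1)) s1 a1 s
        = ∑ s1, ∑ a1, ∑ s0, ∑ a0,
            μ s0 * π h0 s0 a0 * dGen M π (M.P h0 s0 a0) (h0 + 1) j s1
              * π (h0 + (j+1)) s1 a1 * M.P (h0 + (j+1)) s1 a1 s := by
          simp only [ih, Finset.sum_mul]
      _ = ∑ s0, ∑ a0, ∑ s1, ∑ a1,
            μ s0 * π h0 s0 a0 * dGen M π (M.P h0 s0 a0) (h0 + 1) j s1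
              * π (h0 + (j+1)) s1 a1 * M.P (h0 + (j+1)) s1 a1 s := sum_swap4 _
      _ = ∑ s0, ∑ a0, μ s0 * π h0 s0 a0 * dGen M π (M.P h0 s0 a0) (h0 + 1) (j+1) s := by
          refine Finset.sum_congr rfl fun s0 _ => Finset.sum_congr rfl fun a0 _ => ?_
          show _ = μ s0 * π h0 s0 a0 *
            ∑ s1, ∑ a1, dGen M π (M.P h0 s0 a0) (h0+1) j s1 * π ((h0+1) + j) s1 a1
              * M.P ((h0+1) + j) s1 a1 s
          rw [show h0 + 1 + j = h0 + (j+1) by omega]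
          simp only [Finset.mul_sum]
          exact Finset.sum_congr rfl fun s1 _ => Finset.sum_congr rfl fun a1 _ => by ring

lemma dState_eq_dGen (M : MDP S A) (π : ℕ → S → A → ℝ) (h : ℕ) :
    dState M π h = dGen M π M.ρ 0 h := by
  induction h with
  | zero => rfl
  | succ h ih => funext s'; show (∑ s, ∑ a, dState M π h s * π h s a * M.P h s a s') = _
                 simp [dGen, ih, Nat.zero_add]

lemma sum_consEquiv {n : ℕ} (F : (Fin (n+1) → S × A) → ℝ) :
    ∑ tr : Fin (n+1) → S × A, F tr = ∑ x : S × A, ∑ t : Fin n → S × A, F (Fin.cons x t) := by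
  rw [← Equiv.sum_comp (Fin.consEquiv (fun _ : Fin (n+1) => S × A)) F, Fintype.sum_prod_type]
  rfl

lemma chain_sum (M : MDP S A) (π : ℕ → S → A → ℝ) (hπ : IsPolicy π) :
    ∀ (n h0 : ℕ) (μ : S → ℝ),
      ∑ tr : Fin (n + 1) → S × A, μ (tr 0).1 * pcK M π h0 (n + 1) tr = ∑ s, μ s := by
  intro n
  induction n with
  | zero =>
    intro h0 μ
    rw [← Equiv.sum_comp (Equiv.funUnique (Fin 1) (S × A)).symm]
    calc ∑ x : S × A, μ ((fun _ => x) (0:Fin 1)).1 * pcK M π h0 1 (fun _ => x)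
        = ∑ x : S × A, μ x.1 * π h0 x.1 x.2 := by
          refine Finset.sum_congr rfl fun x _ => ?_
          rw [pcK, Fin.prod_univ_one]
          norm_num
      _ = ∑ s, μ s := by
          rw [Fintype.sum_prod_type]
          refine Finset.sum_congr rfl fun s _ => ?_
          simp [← Finset.mul_sum, hπ.2]
  | succ n ih =>
    intro h0 μ
    rw [sum_consEquiv]
    calc ∑ x : S × A, ∑ t : Fin n.succ → S × A,
          μ ((Fin.cons x t : Fin (n+2) → S × A) 0).1 * pcK M π h0 (n+2) (Fin.cons x t)
        = ∑ x : S × A, μ x.1 * π h0 x.1 x.2 *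
            ∑ t : Fin (n+1) → S × A, M.P h0 x.1 x.2 (t 0).1 * pcK M π (h0+1) (n+1) t := by
          refine Finset.sum_congr rfl fun x _ => ?_
          rw [Finset.mul_sum]
          refine Finset.sum_congr rfl fun t _ => ?_
          rw [pcK_cons, Fin.cons_zero]
          ring
      _ = ∑ x : S × A, μ x.1 * π h0 x.1 x.2 := by
          refine Finset.sum_congr rfl fun x _ => ?_
          rw [ih (h0+1) (M.P h0 x.1 x.2), M.P_sum, mul_one]
      _ = ∑ s, μ s := by
          rw [Fintype.sum_prod_type]
          refine Finset.sum_congr rfl fun s _ => ?_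
          simp [← Finset.mul_sum, hπ.2]

lemma chain_marg (M : MDP S A) (π : ℕ → S → A → ℝ) (hπ : IsPolicy π) :
    ∀ (n j : ℕ) (hj : j < n + 1) (h0 : ℕ) (μ : S → ℝ) (s : S),
      ∑ tr : Fin (n+1) → S × A,
          μ (tr 0).1 * pcK M π h0 (n+1) tr * (if (tr ⟨j, hj⟩).1 = s then 1 else 0)
        = dGen M π μ h0 j s := by
  intro n
  induction n with
  | zero =>
    intro j hj h0 μ s
    obtain rfl : j = 0 := by omega
    rw [← Equiv.sum_comp (Equiv.funUnique (Fin 1) (S × A)).symm]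
    calc ∑ x : S × A, μ ((fun _ => x) (0:Fin 1)).1 * pcK M π h0 1 (fun _ => x) *
            (if ((fun _ => x) (⟨0, hj⟩ : Fin 1)).1 = s then 1 else 0)
        = ∑ x : S × A, μ x.1 * π h0 x.1 x.2 * (if x.1 = s then 1 else 0) := by
          refine Finset.sum_congr rfl fun x _ => ?_
          rw [pcK, Fin.prod_univ_one]
          norm_num
      _ = dGen M π μ h0 0 s := by
          rw [Fintype.sum_prod_type]
          trans ∑ s0 : S, (if s0 = s then μ s0 else 0)
          · exact Finset.sum_congr rfl fun s0 _ => by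
              by_cases h : s0 = s <;> simp [h, ← Finset.mul_sum, hπ.2]
          · simp [dGen]
  | succ n ih =>
    intro j hj h0 μ s
    rw [sum_consEquiv]
    rcases j with _ | k
    · calc ∑ x : S × A, ∑ t : Fin (n+1) → S × A,
            μ ((Fin.cons x t : Fin (n+2) → S × A) 0).1 * pcK M π h0 (n+2) (Fin.cons x t) *
              (if ((Fin.cons x t : Fin (n+2) → S × A) ⟨0, hj⟩).1 = s then 1 else 0)
          = ∑ x : S × A, μ x.1 * π h0 x.1 x.2 * (if x.1 = s then 1 else 0) *
              ∑ t : Fin (n+1) → S × A, M.P h0 x.1 x.2 (t 0).1 * pcK M π (h0+1) (n+1) t := by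
            refine Finset.sum_congr rfl fun x _ => ?_
            rw [Finset.mul_sum]
            refine Finset.sum_congr rfl fun t _ => ?_
            rw [pcK_cons, show (⟨0, hj⟩ : Fin (n+2)) = 0 from rfl, Fin.cons_zero]
            ring
        _ = ∑ x : S × A, μ x.1 * π h0 x.1 x.2 * (if x.1 = s then 1 else 0) := by
            refine Finset.sum_congr rfl fun x _ => ?_
            rw [chain_sum M π hπ n (h0+1) (M.P h0 x.1 x.2), M.P_sum, mul_one]
        _ = dGen M π μ h0 0 s := by
            rw [Fintype.sum_prod_type]
            trans ∑ s0 : S, (if s0 = s then μ s0 else 0)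
            · exact Finset.sum_congr rfl fun s0 _ => by
                by_cases h : s0 = s <;> simp [h, ← Finset.mul_sum, hπ.2]
            · simp [dGen]
    · have hk : k < n + 1 := by omega
      calc ∑ x : S × A, ∑ t : Fin (n+1) → S × A,
            μ ((Fin.cons x t : Fin (n+2) → S × A) 0).1 * pcK M π h0 (n+2) (Fin.cons x t) *
              (if ((Fin.cons x t : Fin (n+2) → S × A) ⟨k+1, hj⟩).1 = s then 1 else 0)
          = ∑ x : S × A, μ x.1 * π h0 x.1 x.2 *
              ∑ t : Fin (n+1) → S × A, M.P h0 x.1 x.2 (t 0).1 * pcK M π (h0+1) (n+1) t *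
                (if (t ⟨k, hk⟩).1 = s then 1 else 0) := by
            refine Finset.sum_congr rfl fun x _ => ?_
            rw [Finset.mul_sum]
            refine Finset.sum_congr rfl fun t _ => ?_
            rw [pcK_cons, Fin.cons_zero, cons_mk_succ]
            ring
        _ = ∑ x : S × A, μ x.1 * π h0 x.1 x.2 * dGen M π (M.P h0 x.1 x.2) (h0+1) k s := by
            refine Finset.sum_congr rfl fun x _ => ?_
            rw [ih k hk (h0+1) (M.P h0 x.1 x.2) s]
        _ = dGen M π μ h0 (k+1) s := by
            rw [dGen_step, Fintype.sum_prod_type]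

lemma prod_split (M : MDP S A) (π : ℕ → S → A → ℝ) (m : ℕ) (hm : 0 < m) (tr : Fin m → S × A) :
    (∏ h : Fin m, ((if (h : ℕ) = 0 then M.ρ (tr h).1 else 1) * π h (tr h).1 (tr h).2 *
      (if hh : (h : ℕ) + 1 < m then M.P h (tr h).1 (tr h).2 (tr ⟨(h : ℕ) + 1, hh⟩).1 else 1)))
    = M.ρ (tr ⟨0, hm⟩).1 * pcK M π 0 m tr := by
  obtain ⟨n, rfl⟩ : ∃ n, m = n + 1 := ⟨m - 1, by omega⟩
  rw [pcK]
  rw [show (∏ h : Fin (n+1), ((if (h : ℕ) = 0 then M.ρ (tr h).1 else 1) * π h (tr h).1 (tr h).2 *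
      (if hh : (h : ℕ) + 1 < n+1 then M.P h (tr h).1 (tr h).2 (tr ⟨(h : ℕ) + 1, hh⟩).1 else 1)))
    = ∏ h : Fin (n+1), ((if (h : ℕ) = 0 then M.ρ (tr h).1 else 1) * (π h (tr h).1 (tr h).2 *
      (if hh : (h : ℕ) + 1 < n+1 then M.P h (tr h).1 (tr h).2 (tr ⟨(h : ℕ) + 1, hh⟩).1 else 1)))
    from Finset.prod_congr rfl fun h _ => by ring]
  rw [Finset.prod_mul_distrib]
  congr 1
  · rw [Fin.prod_univ_succ]
    simp
  · exact Finset.prod_congr rfl fun i _ => by rw [Nat.zero_add]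

lemma trajProb_eq (M : MDP S A) (π : ℕ → S → A → ℝ) (hm : 0 < M.H) (tr : Fin M.H → S × A) :
    trajProb M π tr = M.ρ (tr ⟨0, hm⟩).1 * pcK M π 0 M.H tr :=
  prod_split M π M.H hm tr

lemma chain_sum' (M : MDP S A) (π : ℕ → S → A → ℝ) (hπ : IsPolicy π) (m : ℕ) (hm : 0 < m)
    (μ : S → ℝ) :
    ∑ tr : Fin m → S × A, μ (tr ⟨0, hm⟩).1 * pcK M π 0 m tr = ∑ s, μ s := by
  obtain ⟨n, rfl⟩ : ∃ n, m = n + 1 := ⟨m - 1, by omega⟩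
  exact chain_sum M π hπ n 0 μ

lemma chain_marg' (M : MDP S A) (π : ℕ → S → A → ℝ) (hπ : IsPolicy π) (m : ℕ) (h : ℕ)
    (hh : h < m) (μ : S → ℝ) (s : S) :
    ∑ tr : Fin m → S × A,
        μ (tr ⟨0, Nat.lt_of_le_of_lt (Nat.zero_le h) hh⟩).1 * pcK M π 0 m tr *
          (if (tr ⟨h, hh⟩).1 = s then 1 else 0)
      = dGen M π μ 0 h s := by
  obtain ⟨n, rfl⟩ : ∃ n, m = n + 1 := ⟨m - 1, by omega⟩
  exact chain_marg M π hπ n h hh 0 μ s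

lemma sum_trajProb (M : MDP S A) (π : ℕ → S → A → ℝ) (hπ : IsPolicy π) (hm : 0 < M.H) :
    ∑ tr : Fin M.H → S × A, trajProb M π tr = 1 := by
  have h1 : ∑ tr : Fin M.H → S × A, trajProb M π tr
      = ∑ tr : Fin M.H → S × A, M.ρ (tr ⟨0, hm⟩).1 * pcK M π 0 M.H tr :=
    Finset.sum_congr rfl fun tr _ => trajProb_eq M π hm tr
  rw [h1, chain_sum' M π hπ M.H hm M.ρ, M.ρ_sum]

lemma marg_trajProb (M : MDP S A) (π : ℕ → S → A → ℝ) (hπ : IsPolicy π) (h : ℕ)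
    (hh : h < M.H) (s : S) :
    ∑ tr : Fin M.H → S × A, trajProb M π tr * (if (tr ⟨h, hh⟩).1 = s then 1 else 0)
      = dState M π h s := by
  have hm : 0 < M.H := by omega
  have h1 : ∀ tr : Fin M.H → S × A, trajProb M π tr * (if (tr ⟨h, hh⟩).1 = s then 1 else 0)
      = M.ρ (tr ⟨0, hm⟩).1 * pcK M π 0 M.H tr * (if (tr ⟨h, hh⟩).1 = s then 1 else 0) :=
    fun tr => by rw [trajProb_eq M π hm tr]
  rw [Finset.sum_congr rfl fun tr _ => h1 tr, chain_marg' M π hπ M.H h hh M.ρ s,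
    dState_eq_dGen]

lemma trajProb_nonneg (M : MDP S A) (π : ℕ → S → A → ℝ) (hπ : IsPolicy π)
    (tr : Fin M.H → S × A) : 0 ≤ trajProb M π tr := by
  refine Finset.prod_nonneg fun i _ => ?_
  have h1 : 0 ≤ (if (i : ℕ) = 0 then M.ρ (tr i).1 else 1) := by
    split <;> [exact M.ρ_nonneg _; norm_num]
  have h2 : 0 ≤ π i (tr i).1 (tr i).2 := hπ.1 _ _ _
  have h3 : 0 ≤ (if hh : (i : ℕ) + 1 < M.H then
      M.P i (tr i).1 (tr i).2 (tr ⟨(i : ℕ) + 1, hh⟩).1 else 1) := by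
    split <;> [exact M.P_nonneg _ _ _ _; norm_num]
  positivity

lemma dState_nonneg (M : MDP S A) (π : ℕ → S → A → ℝ) (hπ : IsPolicy π) :
    ∀ h s, 0 ≤ dState M π h s := by
  intro h
  induction h with
  | zero => exact M.ρ_nonneg
  | succ h ih =>
    intro s'
    refine Finset.sum_nonneg fun s _ => Finset.sum_nonneg fun a _ => ?_
    have := ih s
    have := hπ.1 h s a
    have := M.P_nonneg h s a s'
    positivity

lemma sum_dState (M : MDP S A) (π : ℕ → S → A → ℝ) (hπ : IsPolicy π) :
    ∀ h, ∑ s, dState M π h s = 1 := by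
  intro h
  induction h with
  | zero => exact M.ρ_sum
  | succ h ih =>
    show (∑ s' , ∑ s, ∑ a, dState M π h s * π h s a * M.P h s a s') = 1
    rw [Finset.sum_comm]
    calc ∑ s, ∑ s', ∑ a, dState M π h s * π h s a * M.P h s a s'
        = ∑ s, dState M π h s := by
          refine Finset.sum_congr rfl fun s _ => ?_
          rw [Finset.sum_comm]
          calc ∑ a, ∑ s', dState M π h s * π h s a * M.P h s a s'
              = ∑ a, dState M π h s * π h s a := by
                refine Finset.sum_congr rfl fun a _ => ?_
                rw [← Finset.mul_sum, M.P_sum, mul_one]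
            _ = dState M π h s := by rw [← Finset.mul_sum, hπ.2, mul_one]
      _ = 1 := ih

lemma policy_le_one (π : ℕ → S → A → ℝ) (hπ : IsPolicy π) (h : ℕ) (s : S) (a : A) :
    π h s a ≤ 1 := by
  have := Finset.single_le_sum (f := fun a' => π h s a') (fun a' _ => hπ.1 h s a')
    (Finset.mem_univ a)
  rwa [hπ.2] at this

lemma dState_le_one (M : MDP S A) (π : ℕ → S → A → ℝ) (hπ : IsPolicy π) (h : ℕ) (s : S) :
    dState M π h s ≤ 1 := by
  have h1 := Finset.single_le_sum (f := fun s' => dState M π h s')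
    (fun s' _ => dState_nonneg M π hπ h s') (Finset.mem_univ s)
  rwa [sum_dState M π hπ h] at h1

lemma value_nonneg (M : MDP S A) (π : ℕ → S → A → ℝ) (hπ : IsPolicy π) :
    0 ≤ value M π := by
  refine Finset.sum_nonneg fun h _ => Finset.sum_nonneg fun s _ =>
    Finset.sum_nonneg fun a _ => ?_
  have h1 := dState_nonneg M π hπ h s
  have h2 := hπ.1 h s a
  have h3 := M.r_nonneg h s a
  rw [dSA]
  positivity

lemma value_le (M : MDP S A) (π : ℕ → S → A → ℝ) (hπ : IsPolicy π) :
    value M π ≤ (M.H : ℝ) := by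
  rw [value]
  calc ∑ h ∈ Finset.range M.H, ∑ s, ∑ a, dSA M π h s a * M.r h s a
      ≤ ∑ h ∈ Finset.range M.H, (1 : ℝ) := by
        refine Finset.sum_le_sum fun h _ => ?_
        calc ∑ s, ∑ a, dSA M π h s a * M.r h s a
            ≤ ∑ s, ∑ a, dSA M π h s a := by
              refine Finset.sum_le_sum fun s _ => Finset.sum_le_sum fun a _ => ?_
              have h1 := dState_nonneg M π hπ h s
              have h2 := hπ.1 h s a
              have hd : 0 ≤ dSA M π h s a := by rw [dSA]; positivity
              nlinarith [M.r_le_one h s a]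
          _ = ∑ s, dState M π h s := by
              refine Finset.sum_congr rfl fun s _ => ?_
              simp only [dSA]
              rw [← Finset.mul_sum, hπ.2, mul_one]
          _ = 1 := sum_dState M π hπ h
    _ = (M.H : ℝ) := by simp

lemma vd (M : MDP S A) (πE π : ℕ → S → A → ℝ) (f : ℕ → S → A)
    (hπE : IsPolicy πE) (hf : ∀ h s a, πE h s a = if a = f h s then 1 else 0)
    (hπ : IsPolicy π) :
    value M πE - value M π ≤
      (M.H : ℝ) * ∑ h ∈ Finset.range M.H, ∑ s, dState M πE h s * (1 - π h s (f h s)) := by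
  set δ : ℕ → ℝ := fun h => ∑ s, dState M πE h s * (1 - π h s (f h s)) with hδdef
  set e : ℕ → ℝ := fun h => ∑ s, max (dState M πE h s - dState M π h s) 0 with hedef
  have hδ0 : ∀ h, 0 ≤ δ h := by
    intro h
    refine Finset.sum_nonneg fun s _ => mul_nonneg (dState_nonneg M πE hπE h s) ?_
    have := policy_le_one π hπ h s (f h s); linarith
  have claimA : ∀ h, (∑ s, ∑ a, max (dSA M πE h s a - dSA M π h s a) 0) ≤ e h + δ h := by
    intro h
    rw [hedef, hδdef]
    simp only []
    rw [← Finset.sum_add_distrib]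
    refine Finset.sum_le_sum fun s _ => ?_
    have key : ∀ a, max (dSA M πE h s a - dSA M π h s a) 0 ≤
        (if a = f h s then max (dState M πE h s - dState M π h s) 0
          + dState M πE h s * (1 - π h s (f h s)) else 0) := by
      intro a
      have dEnn := dState_nonneg M πE hπE h s
      have dPnn := dState_nonneg M π hπ h s
      by_cases ha : a = f h s
      · rw [if_pos ha, dSA, dSA, hf, if_pos ha, ha]
        set dE := dState M πE h s
        set dP := dState M π h s
        set pf := π h s (f h s) with hpf
        have pfnn : 0 ≤ pf := hπ.1 h s (f h s)
        have pfle : pf ≤ 1 := policy_le_one π hπ h s (f h s)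
        have m0 : (0:ℝ) ≤ max (dE - dP) 0 := le_max_right _ _
        have h1 : (dE - dP) * pf ≤ max (dE - dP) 0 * pf :=
          mul_le_mul_of_nonneg_right (le_max_left _ _) pfnn
        have h2 : max (dE - dP) 0 * pf ≤ max (dE - dP) 0 * 1 :=
          mul_le_mul_of_nonneg_left pfle m0
        apply max_le
        · nlinarith
        · nlinarith
      · rw [if_neg ha, dSA, dSA, hf, if_neg ha]
        apply max_le _ le_rfl
        have := mul_nonneg dPnn (hπ.1 h s a)
        nlinarith
    calc ∑ a, max (dSA M πE h s a - dSA M π h s a) 0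
        ≤ ∑ a, (if a = f h s then max (dState M πE h s - dState M π h s) 0
            + dState M πE h s * (1 - π h s (f h s)) else 0) :=
          Finset.sum_le_sum fun a _ => key a
      _ = max (dState M πE h s - dState M π h s) 0
            + dState M πE h s * (1 - π h s (f h s)) := by simp
  have claimB : ∀ h, e (h+1) ≤ ∑ s, ∑ a, max (dSA M πE h s a - dSA M π h s a) 0 := by
    intro h
    have hrepr : ∀ s', dState M πE (h+1) s' - dState M π (h+1) s'
        = ∑ s, ∑ a, (dSA M πE h s a - dSA M π h s a) * M.P h s a s' := by
      intro s'
      show (∑ s, ∑ a, dState M πE h s * πE h s a * M.P h s a s')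
          - (∑ s, ∑ a, dState M π h s * π h s a * M.P h s a s') = _
      rw [← Finset.sum_sub_distrib]
      refine Finset.sum_congr rfl fun s _ => ?_
      rw [← Finset.sum_sub_distrib]
      refine Finset.sum_congr rfl fun a _ => ?_
      simp only [dSA]; ring
    have step : ∀ s', max (dState M πE (h+1) s' - dState M π (h+1) s') 0
        ≤ ∑ s, ∑ a, max (dSA M πE h s a - dSA M π h s a) 0 * M.P h s a s' := by
      intro s'
      rw [hrepr s']
      apply max_le
      · refine Finset.sum_le_sum fun s _ => Finset.sum_le_sum fun a _ => ?_
        exact mul_le_mul_of_nonneg_right (le_max_left _ _) (M.P_nonneg h s a s')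
      · refine Finset.sum_nonneg fun s _ => Finset.sum_nonneg fun a _ =>
          mul_nonneg (le_max_right _ _) (M.P_nonneg h s a s')
    calc e (h+1) ≤ ∑ s', ∑ s, ∑ a, max (dSA M πE h s a - dSA M π h s a) 0 * M.P h s a s' :=
          Finset.sum_le_sum fun s' _ => step s'
      _ = ∑ s, ∑ a, max (dSA M πE h s a - dSA M π h s a) 0 := by
          rw [Finset.sum_comm]
          refine Finset.sum_congr rfl fun s _ => ?_
          rw [Finset.sum_comm]
          refine Finset.sum_congr rfl fun a _ => ?_
          rw [← Finset.mul_sum, M.P_sum, mul_one]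
  have he : ∀ h, e h ≤ ∑ g ∈ Finset.range h, δ g := by
    intro h
    induction h with
    | zero => simp [hedef, dState]
    | succ h ih =>
      calc e (h+1) ≤ ∑ s, ∑ a, max (dSA M πE h s a - dSA M π h s a) 0 := claimB h
        _ ≤ e h + δ h := claimA h
        _ ≤ (∑ g ∈ Finset.range h, δ g) + δ h := by linarith
        _ = ∑ g ∈ Finset.range (h+1), δ g := (Finset.sum_range_succ δ h).symm
  have claimC : ∀ h, (∑ s, ∑ a, (dSA M πE h s a - dSA M π h s a) * M.r h s a)
      ≤ ∑ s, ∑ a, max (dSA M πE h s a - dSA M π h s a) 0 := by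
    intro h
    refine Finset.sum_le_sum fun s _ => Finset.sum_le_sum fun a _ => ?_
    have hr0 := M.r_nonneg h s a
    have hr1 := M.r_le_one h s a
    nlinarith [le_max_left (dSA M πE h s a - dSA M π h s a) 0,
      le_max_right (dSA M πE h s a - dSA M π h s a) 0]
  calc value M πE - value M π
      = ∑ h ∈ Finset.range M.H, ∑ s, ∑ a, (dSA M πE h s a - dSA M π h s a) * M.r h s a := by
        rw [value, value, ← Finset.sum_sub_distrib]
        refine Finset.sum_congr rfl fun h _ => ?_
        rw [← Finset.sum_sub_distrib]
        refine Finset.sum_congr rfl fun s _ => ?_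
        rw [← Finset.sum_sub_distrib]
        exact Finset.sum_congr rfl fun a _ => by ring
    _ ≤ ∑ h ∈ Finset.range M.H, ∑ g ∈ Finset.range M.H, δ g := by
        refine Finset.sum_le_sum fun h hh => ?_
        rw [Finset.mem_range] at hh
        calc ∑ s, ∑ a, (dSA M πE h s a - dSA M π h s a) * M.r h s a
            ≤ ∑ s, ∑ a, max (dSA M πE h s a - dSA M π h s a) 0 := claimC h
          _ ≤ e h + δ h := claimA h
          _ ≤ (∑ g ∈ Finset.range h, δ g) + δ h := by linarith [he h]
          _ = ∑ g ∈ Finset.range (h+1), δ g := (Finset.sum_range_succ δ h).symm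
          _ ≤ ∑ g ∈ Finset.range M.H, δ g := by
              refine Finset.sum_le_sum_of_subset_of_nonneg
                (Finset.range_subset_range.mpr (by omega)) fun g _ _ => hδ0 g
    _ = (M.H : ℝ) * ∑ g ∈ Finset.range M.H, δ g := by
        rw [Finset.sum_const, Finset.card_range, nsmul_eq_mul]

lemma bc_isPolicy [Nonempty A] (n : ℕ → S → A → ℕ) : IsPolicy (bcFromCounts n) := by
  constructor
  · intro h s a
    rw [bcFromCounts]
    split
    · positivity
    · positivity
  · intro h s
    by_cases hcnt : 0 < ∑ a', n h s a'
    · simp only [bcFromCounts, if_pos hcnt]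
      rw [← Finset.sum_div, div_self]
      have h1 : (0:ℝ) < ∑ a', (n h s a' : ℝ) := by
        rw [← Nat.cast_sum]
        exact_mod_cast hcnt
      exact h1.ne'
    · simp only [bcFromCounts, if_neg hcnt]
      rw [Finset.sum_const, nsmul_eq_mul, Finset.card_univ, mul_one_div, div_self]
      exact_mod_cast Fintype.card_ne_zero

lemma consistent (M : MDP S A) (πE : ℕ → S → A → ℝ) (f : ℕ → S → A)
    (hf : ∀ h s a, πE h s a = if a = f h s then 1 else 0)
    (tr : Fin M.H → S × A) (htr : trajProb M πE tr ≠ 0) (h : Fin M.H) :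
    (tr h).2 = f (h : ℕ) (tr h).1 := by
  rw [trajProb] at htr
  have hfac := Finset.prod_ne_zero_iff.mp htr h (Finset.mem_univ h)
  by_contra hne
  apply hfac
  rw [hf, if_neg hne]
  ring

def mi (H : ℕ) (tr : Fin H → S × A) (h : ℕ) (s : S) : ℝ :=
  if hhh : h < H then (if (tr ⟨h, hhh⟩).1 = s then 0 else 1) else 1

lemma mi_of_lt {H : ℕ} (tr : Fin H → S × A) (h : ℕ) (hh : h < H) (s : S) :
    mi H tr h s = if (tr ⟨h, hh⟩).1 = s then 0 else 1 := dif_pos hh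

lemma bc_key [Nonempty A] {N : ℕ} (M : MDP S A) (f : ℕ → S → A) (D : Dataset S A M.H N)
    (hcons : ∀ (i : Fin N) (hs : Fin M.H), ((D i).1 hs).2 = f (hs : ℕ) ((D i).1 hs).1)
    (h : ℕ) (hh : h < M.H) (s : S) :
    1 - bcPolicy D (fun _ => true) h s (f h s) ≤
      ∏ i, (if ((D i).1 ⟨h, hh⟩).1 = s then (0:ℝ) else 1) := by
  by_cases hex : ∃ i, ((D i).1 ⟨h, hh⟩).1 = s
  · obtain ⟨i0, hi0⟩ := hex
    have hzero : (∏ i, (if ((D i).1 ⟨h, hh⟩).1 = s then (0:ℝ) else 1)) = 0 :=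
      Finset.prod_eq_zero (Finset.mem_univ i0) (by rw [if_pos hi0])
    rw [hzero]
    have hcount0 : ∀ a, a ≠ f h s → countSA D (fun _ => true) h s a = 0 := by
      intro a ha
      rw [countSA, Finset.card_eq_zero, Finset.filter_eq_empty_iff]
      intro i _
      simp only [Bool.true_and]
      rw [hit, dif_pos hh]
      simp only [decide_eq_true_eq]
      intro hEq
      have hc := hcons i ⟨h, hh⟩
      rw [hEq] at hc
      exact ha hc
    have hcpos : 0 < countSA D (fun _ => true) h s (f h s) := by
      rw [countSA, Finset.card_pos]
      refine ⟨i0, ?_⟩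
      rw [Finset.mem_filter]
      refine ⟨Finset.mem_univ _, ?_⟩
      simp only [Bool.true_and]
      rw [hit, dif_pos hh]
      simp only [decide_eq_true_eq]
      have h2 := hcons i0 ⟨h, hh⟩
      exact Prod.ext hi0 (by rw [h2, hi0])
    have hsum : (∑ a', countSA D (fun _ => true) h s a')
        = countSA D (fun _ => true) h s (f h s) := by
      refine Finset.sum_eq_single (f h s) (fun b _ hb => hcount0 b hb)
        (fun hmem => absurd (Finset.mem_univ _) hmem)
    have hcond : 0 < ∑ a', countSA D (fun _ => true) h s a' := by rw [hsum]; exact hcpos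
    rw [bcPolicy, bcFromCounts]
    simp only [if_pos hcond]
    have hcast : (∑ a', (countSA D (fun _ => true) h s a' : ℝ))
        = (countSA D (fun _ => true) h s (f h s) : ℝ) := by
      rw [← Nat.cast_sum, hsum]
    rw [hcast, div_self (by exact_mod_cast hcpos.ne')]
    norm_num
  · push_neg at hex
    have hone : (∏ i, (if ((D i).1 ⟨h, hh⟩).1 = s then (0:ℝ) else 1)) = 1 :=
      Finset.prod_eq_one fun i _ => by rw [if_neg (hex i)]
    rw [hone]
    have hnn := (bc_isPolicy (fun h s a => countSA D (fun _ => true) h s a)).1 h s (f h s)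
    rw [bcPolicy]
    linarith

lemma miss_bound (x : ℝ) (hx0 : 0 ≤ x) (hx1 : x ≤ 1) (N : ℕ) (hN : 0 < N) :
    x * (1 - x) ^ N ≤ 4 / (9 * N) := by
  have hNpos : (0:ℝ) < N := by exact_mod_cast hN
  have h1 : (1 - x) ≤ Real.exp (-x) := by
    have := Real.add_one_le_exp (-x); linarith
  have h2 : (1 - x) ^ N ≤ Real.exp (-x) ^ N := pow_le_pow_left₀ (by linarith) h1 N
  have h3 : Real.exp (-x) ^ N = Real.exp (-((N:ℝ) * x)) := by
    rw [← Real.exp_nat_mul]; ring_nf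
  have key : (N : ℝ) * x * Real.exp (-((N:ℝ) * x)) ≤ Real.exp (-1) := by
    set t := (N:ℝ) * x with ht
    have ht0 : 0 ≤ t := by positivity
    have h4 : t ≤ Real.exp (t - 1) := by
      have := Real.add_one_le_exp (t - 1); linarith
    calc t * Real.exp (-t) ≤ Real.exp (t - 1) * Real.exp (-t) :=
          mul_le_mul_of_nonneg_right h4 (Real.exp_nonneg _)
      _ = Real.exp (-1) := by rw [← Real.exp_add]; ring_nf
  have hexp : Real.exp (-1) ≤ 4 / 9 := by
    rw [Real.exp_neg]
    have h5 : (9:ℝ)/4 ≤ Real.exp 1 := by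
      have := Real.exp_one_gt_d9; linarith
    calc (Real.exp 1)⁻¹ ≤ ((9:ℝ)/4)⁻¹ := by
          apply inv_anti₀ (by norm_num) h5
      _ = 4/9 := by norm_num
  have step : x * (1-x)^N ≤ x * Real.exp (-((N:ℝ)*x)) := by
    refine mul_le_mul_of_nonneg_left ?_ hx0
    rw [← h3]; exact h2
  calc x * (1-x)^N ≤ x * Real.exp (-((N:ℝ)*x)) := step
    _ = ((N:ℝ) * x * Real.exp (-((N:ℝ)*x))) / N := by field_simp
    _ ≤ Real.exp (-1) / N := by gcongr
    _ ≤ (4/9) / N := by gcongr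
    _ = 4 / (9*N) := by ring

end NBCU

open NBCU in
/-- **Theorem 3 (NBCU when the behavior policy equals the expert).**
Under Assumption 1 with `π^β = π^E`, for any `η ∈ [0,1]` the NBCU policy (BC on the union
dataset `D^U`) satisfies `E[V(π^E) − V(π^NBCU)] ≤ min{H, (4/9)|S|H²/N_tot}`. -/
theorem nbcu_imitation_gap_expert_behavior
    (M : MDP S A) (πE : ℕ → S → A → ℝ)
    (hπE : IsPolicy πE) (hdet : IsDetPolicy πE)
    (η : ℝ) (hη : η ∈ Set.Icc (0 : ℝ) 1) (Ntot : ℕ) (hN : 0 < Ntot) :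
    expect M πE πE η Ntot
        (fun D => value M πE - value M (bcPolicy D (fun _ => true)))
      ≤ min (M.H : ℝ) ((4 / 9) * (Fintype.card S : ℝ) * (M.H : ℝ) ^ 2 / Ntot) := by
  obtain ⟨hη0, hη1⟩ := hη
  obtain ⟨f, hf⟩ := hdet
  have hSne : Nonempty S := by
    by_contra hS
    rw [not_nonempty_iff] at hS
    have h1 := M.ρ_sum
    rw [Finset.univ_eq_empty, Finset.sum_empty] at h1
    norm_num at h1
  have hAne : Nonempty A := by
    by_contra hA
    rw [not_nonempty_iff] at hA
    have h1 := hπE.2 0 (Classical.arbitrary S)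
    rw [Finset.univ_eq_empty, Finset.sum_empty] at h1
    norm_num at h1
  by_cases hH : M.H = 0
  · have hv : ∀ π : ℕ → S → A → ℝ, value M π = 0 := by
      intro π; rw [value, hH]; simp
    have hlhs : expect M πE πE η Ntot
        (fun D => value M πE - value M (bcPolicy D (fun _ => true))) = 0 := by
      simp only [_root_.expect]
      rw [Finset.sum_congr rfl fun D _ => by rw [hv, hv, sub_zero, mul_zero]]
      exact Finset.sum_const_zero
    rw [hlhs, hH]
    norm_num
  have hm : 0 < M.H := Nat.pos_of_ne_zero hH
  -- single-trajectory weight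
  set q : ((Fin M.H → S × A) × Bool) → ℝ :=
    fun t => if t.2 then η * trajProb M πE t.1 else (1 - η) * trajProb M πE t.1 with hq
  have hp_eq : ∀ D : Dataset S A M.H Ntot, datasetProb M πE πE η D = ∏ i, q (D i) :=
    fun D => rfl
  have hq_nonneg : ∀ t, 0 ≤ q t := by
    intro t
    have hp := trajProb_nonneg M πE hπE t.1
    rw [hq]
    simp only []
    split
    · exact mul_nonneg hη0 hp
    · exact mul_nonneg (by linarith) hp
  have hq_sum : ∑ t, q t = 1 := by
    rw [hq, Fintype.sum_prod_type]
    calc ∑ tr : Fin M.H → S × A, ∑ b : Bool,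
          (if b then η * trajProb M πE tr else (1 - η) * trajProb M πE tr)
        = ∑ tr : Fin M.H → S × A, trajProb M πE tr := by
          refine Finset.sum_congr rfl fun tr _ => ?_
          rw [Fintype.sum_bool, if_pos rfl, if_neg Bool.false_ne_true]
          ring
      _ = 1 := sum_trajProb M πE hπE hm
  have hp_nonneg : ∀ D : Dataset S A M.H Ntot, 0 ≤ datasetProb M πE πE η D := fun D => by
    rw [hp_eq]; exact Finset.prod_nonneg fun i _ => hq_nonneg _
  have hp_sum : ∑ D : Dataset S A M.H Ntot, datasetProb M πE πE η D = 1 := by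
    rw [Finset.sum_congr rfl fun D _ => hp_eq D, ← Fintype.sum_pow, hq_sum, one_pow]
  have hbcpol : ∀ D : Dataset S A M.H Ntot, IsPolicy (bcPolicy D (fun _ => true)) :=
    fun D => bc_isPolicy _
  refine le_min ?_ ?_
  · -- trivial bound by H
    simp only [_root_.expect]
    calc ∑ D : Dataset S A M.H Ntot,
          datasetProb M πE πE η D * (value M πE - value M (bcPolicy D (fun _ => true)))
        ≤ ∑ D : Dataset S A M.H Ntot, datasetProb M πE πE η D * (M.H : ℝ) := by
          refine Finset.sum_le_sum fun D _ => ?_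
          refine mul_le_mul_of_nonneg_left ?_ (hp_nonneg D)
          have h1 := value_le M πE hπE
          have h2 := value_nonneg M (bcPolicy D (fun _ => true)) (hbcpol D)
          linarith
      _ = (M.H : ℝ) := by rw [← Finset.sum_mul, hp_sum, one_mul]
  -- main bound
  have gapb : ∀ D : Dataset S A M.H Ntot, datasetProb M πE πE η D ≠ 0 →
      value M πE - value M (bcPolicy D (fun _ => true)) ≤
        (M.H : ℝ) * ∑ h ∈ Finset.range M.H, ∑ s,
          dState M πE h s * ∏ i, mi M.H ((D i).1) h s := by
    intro D hD
    have hcons : ∀ (i : Fin Ntot) (hs : Fin M.H),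
        ((D i).1 hs).2 = f (hs : ℕ) ((D i).1 hs).1 := by
      intro i hs
      have hi : q (D i) ≠ 0 := by
        rw [hp_eq] at hD
        exact Finset.prod_ne_zero_iff.mp hD i (Finset.mem_univ i)
      have htr : trajProb M πE (D i).1 ≠ 0 := by
        intro h0
        apply hi
        rw [hq]
        simp only []
        split <;> rw [h0] <;> ring
      exact consistent M πE f hf (D i).1 htr hs
    calc value M πE - value M (bcPolicy D (fun _ => true))
        ≤ (M.H : ℝ) * ∑ h ∈ Finset.range M.H, ∑ s,
            dState M πE h s * (1 - bcPolicy D (fun _ => true) h s (f h s)) :=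
          vd M πE _ f hπE hf (hbcpol D)
      _ ≤ (M.H : ℝ) * ∑ h ∈ Finset.range M.H, ∑ s,
            dState M πE h s * ∏ i, mi M.H ((D i).1) h s := by
          refine mul_le_mul_of_nonneg_left ?_ (by positivity)
          refine Finset.sum_le_sum fun h hhm => Finset.sum_le_sum fun s _ => ?_
          rw [Finset.mem_range] at hhm
          refine mul_le_mul_of_nonneg_left ?_ (dState_nonneg M πE hπE h s)
          calc 1 - bcPolicy D (fun _ => true) h s (f h s)
              ≤ ∏ i, (if ((D i).1 ⟨h, hhm⟩).1 = s then (0:ℝ) else 1) :=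
                bc_key M f D hcons h hhm s
            _ = ∏ i, mi M.H ((D i).1) h s :=
                Finset.prod_congr rfl fun i _ => (mi_of_lt ((D i).1) h hhm s).symm
  have hqmi : ∀ (h : ℕ), h < M.H → ∀ s : S,
      (∑ t : (Fin M.H → S × A) × Bool, q t * mi M.H t.1 h s) = 1 - dState M πE h s := by
    intro h hhm s
    rw [hq, Fintype.sum_prod_type]
    calc ∑ tr : Fin M.H → S × A, ∑ b : Bool,
          (if b then η * trajProb M πE tr else (1 - η) * trajProb M πE tr) * mi M.H tr h s
        = ∑ tr : Fin M.H → S × A,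
            (trajProb M πE tr - trajProb M πE tr * (if (tr ⟨h, hhm⟩).1 = s then 1 else 0)) := by
          refine Finset.sum_congr rfl fun tr _ => ?_
          rw [Fintype.sum_bool, if_pos rfl, if_neg Bool.false_ne_true, mi_of_lt tr h hhm s]
          by_cases hts : (tr ⟨h, hhm⟩).1 = s <;> simp [hts] <;> ring
      _ = 1 - dState M πE h s := by
          rw [Finset.sum_sub_distrib, sum_trajProb M πE hπE hm,
            marg_trajProb M πE hπE h hhm s]
  simp only [_root_.expect]
  calc ∑ D : Dataset S A M.H Ntot,
        datasetProb M πE πE η D * (value M πE - value M (bcPolicy D (fun _ => true)))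
      ≤ ∑ D : Dataset S A M.H Ntot, datasetProb M πE πE η D *
          ((M.H : ℝ) * ∑ h ∈ Finset.range M.H, ∑ s,
            dState M πE h s * ∏ i, mi M.H ((D i).1) h s) := by
        refine Finset.sum_le_sum fun D _ => ?_
        by_cases hD : datasetProb M πE πE η D = 0
        · rw [hD, zero_mul, zero_mul]
        · exact mul_le_mul_of_nonneg_left (gapb D hD) (hp_nonneg D)
    _ = (M.H : ℝ) * ∑ D : Dataset S A M.H Ntot, ∑ h ∈ Finset.range M.H, ∑ s,
          datasetProb M πE πE η D * (dState M πE h s * ∏ i, mi M.H ((D i).1) h s) := by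
        simp only [Finset.mul_sum]
        refine Finset.sum_congr rfl fun D _ => Finset.sum_congr rfl fun h _ =>
          Finset.sum_congr rfl fun s _ => by ring
    _ = (M.H : ℝ) * ∑ h ∈ Finset.range M.H, ∑ s, dState M πE h s *
          ∑ D : Dataset S A M.H Ntot, ∏ i, (q (D i) * mi M.H ((D i).1) h s) := by
        congr 1
        rw [Finset.sum_comm]
        refine Finset.sum_congr rfl fun h _ => ?_
        rw [Finset.sum_comm]
        refine Finset.sum_congr rfl fun s _ => ?_
        rw [Finset.mul_sum]
        refine Finset.sum_congr rfl fun D _ => ?_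
        rw [hp_eq, Finset.prod_mul_distrib]
        ring
    _ = (M.H : ℝ) * ∑ h ∈ Finset.range M.H, ∑ s, dState M πE h s *
          (∑ t : (Fin M.H → S × A) × Bool, q t * mi M.H t.1 h s) ^ Ntot := by
        congr 1
        refine Finset.sum_congr rfl fun h _ => Finset.sum_congr rfl fun s _ => ?_
        rw [show (∑ D : Dataset S A M.H Ntot, ∏ i, (q (D i) * mi M.H ((D i).1) h s))
            = (∑ t : (Fin M.H → S × A) × Bool, q t * mi M.H t.1 h s) ^ Ntot from
          (Fintype.sum_pow (fun t => q t * mi M.H t.1 h s) Ntot).symm]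
    _ ≤ (M.H : ℝ) * ∑ h ∈ Finset.range M.H, ∑ s : S, (4 / (9 * (Ntot:ℝ))) := by
        refine mul_le_mul_of_nonneg_left ?_ (by positivity)
        refine Finset.sum_le_sum fun h hhm => Finset.sum_le_sum fun s _ => ?_
        rw [Finset.mem_range] at hhm
        rw [hqmi h hhm s]
        exact miss_bound _ (dState_nonneg M πE hπE h s) (dState_le_one M πE hπE h s) Ntot hN
    _ = 4 / 9 * (Fintype.card S : ℝ) * (M.H : ℝ) ^ 2 / Ntot := by
        rw [Finset.sum_const, Finset.sum_const, Finset.card_univ, Finset.card_range,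
          nsmul_eq_mul, nsmul_eq_mul]
        have hNne : (Ntot : ℝ) ≠ 0 := by positivity
        field_simp
end

section
/- Let G and B be nonempty finite sets of points, each point x carrying a feature vector φ(x) ∈ ℝ^d, with margin function Δ(θ) = min_{x ∈ G} ⟨θ, φ(x)⟩ − max_{y ∈ B} ⟨θ, φ(y)⟩. Let L : ℝ^d → ℝ be the logistic loss L(θ) = (1/m) Σ_{i=1}^m log(1 + exp(−⟨x_i, θ⟩)) + (1/n) Σ_{j=1}^n log(1 + exp(⟨y_j, θ⟩)) built from feature vectors x_1,…,x_m, y_1,…,y_n ∈ ℝ^d, let θ* be a global minimizer of L, and let θ̄ ∈ ℝ^d satisfy Δ(θ̄) > 0 (linear separability). Suppose τ > 0 satisfies the quadratic growth inequality L(θ̄) ≥ L(θ*) + (τ/2)‖θ̄ − θ*‖², and let L_lip = ‖φ(x₁) − φ(x₂)‖ where x₁ ∈ argmin_{x ∈ G} ⟨θ*, φ(x)⟩ and x₂ ∈ argmax_{y ∈ B} ⟨θ*, φ(y)⟩. If L_lip · sqrt(2(L(θ̄) − L(θ*))/τ) < Δ(θ̄), then Δ(θ*) > 0. -/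
open Finset RealInnerProductSpace

/-- **Theorem 5 (WBCU discriminator keeps a positive margin).**
Let `Δ(θ) = min_{x ∈ G} ⟪θ, φ x⟫ − max_{y ∈ B} ⟪θ, φ y⟫` be the margin function of the
nonempty finite sets `G` (good samples) and `B` (bad samples), let `L` be the logistic
loss built from features `x_1,…,x_m, y_1,…,y_n`, let `θ*` be a global minimizer of `L`,
and let `θ̄` satisfy `Δ(θ̄) > 0` (linear separability).  If `τ > 0` satisfies the
quadratic growth inequality `L(θ̄) ≥ L(θ*) + (τ/2)‖θ̄ − θ*‖²` and
`L_lip · sqrt(2(L(θ̄) − L(θ*))/τ) < Δ(θ̄)` where `L_lip = ‖φ x₁ − φ x₂‖` with `x₁` a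
minimizer of `⟪θ*, φ x⟫` over `G` and `x₂` a maximizer of `⟪θ*, φ y⟫` over `B`, then
`Δ(θ*) > 0`. -/
theorem wbcu_margin_positive {X : Type} {d m n : ℕ}
    (G B : Finset X) (hG : G.Nonempty) (hB : B.Nonempty)
    (φ : X → EuclideanSpace ℝ (Fin d))
    (Δ : EuclideanSpace ℝ (Fin d) → ℝ)
    (hΔ : ∀ θ, Δ θ = G.inf' hG (fun x => ⟪θ, φ x⟫) - B.sup' hB (fun y => ⟪θ, φ y⟫))
    (x : Fin m → EuclideanSpace ℝ (Fin d)) (y : Fin n → EuclideanSpace ℝ (Fin d))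
    (L : EuclideanSpace ℝ (Fin d) → ℝ)
    (hL : ∀ θ, L θ =
      (1 / (m : ℝ)) * ∑ i, Real.log (1 + Real.exp (-⟪x i, θ⟫)) +
      (1 / (n : ℝ)) * ∑ j, Real.log (1 + Real.exp (⟪y j, θ⟫)))
    (θs : EuclideanSpace ℝ (Fin d)) (hmin : ∀ θ, L θs ≤ L θ)
    (θb : EuclideanSpace ℝ (Fin d)) (hsep : 0 < Δ θb)
    (τ : ℝ) (hτ : 0 < τ) (hqg : L θs + τ / 2 * ‖θb - θs‖ ^ 2 ≤ L θb)
    (x1 x2 : X)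
    (hx1 : x1 ∈ G) (hx1min : ∀ x' ∈ G, ⟪θs, φ x1⟫ ≤ ⟪θs, φ x'⟫)
    (hx2 : x2 ∈ B) (hx2max : ∀ y' ∈ B, ⟪θs, φ y'⟫ ≤ ⟪θs, φ x2⟫)
    (hcond : ‖φ x1 - φ x2‖ * Real.sqrt (2 * (L θb - L θs) / τ) < Δ θb) :
    0 < Δ θs := by
  have hΔs : Δ θs = ⟪θs, φ x1⟫ - ⟪θs, φ x2⟫ := by
    rw [hΔ]
    congr 1
    · exact le_antisymm (inf'_le _ hx1) (le_inf' _ _ hx1min)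
    · exact le_antisymm (sup'_le _ _ hx2max) (le_sup' (fun y => ⟪θs, φ y⟫) hx2)
  have hΔb : Δ θb ≤ ⟪θb, φ x1⟫ - ⟪θb, φ x2⟫ := by
    rw [hΔ]
    exact sub_le_sub (inf'_le _ hx1) (le_sup' (fun y => ⟪θb, φ y⟫) hx2)
  have hnorm : ‖θb - θs‖ ≤ Real.sqrt (2 * (L θb - L θs) / τ) := by
    rw [show ‖θb - θs‖ = Real.sqrt (‖θb - θs‖ ^ 2) by
      rw [Real.sqrt_sq (norm_nonneg _)]]
    apply Real.sqrt_le_sqrt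
    rw [le_div_iff₀ hτ]
    nlinarith
  have hinner : ⟪θb - θs, φ x1 - φ x2⟫ ≤ ‖θb - θs‖ * ‖φ x1 - φ x2‖ :=
    real_inner_le_norm _ _
  have hexp : ⟪θb - θs, φ x1 - φ x2⟫ =
      (⟪θb, φ x1⟫ - ⟪θb, φ x2⟫) - (⟪θs, φ x1⟫ - ⟪θs, φ x2⟫) := by
    simp [inner_sub_left, inner_sub_right]; ring
  have hmul : ‖θb - θs‖ * ‖φ x1 - φ x2‖ ≤
      Real.sqrt (2 * (L θb - L θs) / τ) * ‖φ x1 - φ x2‖ :=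
    mul_le_mul_of_nonneg_right hnorm (norm_nonneg _)
  rw [hΔs]
  nlinarith
end

section
/- Consider dimension d = 1. Let D^E (expert samples) and D^S = D^{S,1} ∪ D^{S,2} (supplementary samples) be nonempty finite multisets of points, each point carrying a feature φ ∈ ℝ, with union D^U = D^E ∪ D^S, and define the logistic loss L(θ) = (1/|D^E|) Σ_{x ∈ D^E} log(1 + exp(−φ(x)·θ)) + (1/|D^U|) Σ_{x ∈ D^U} log(1 + exp(φ(x)·θ)) for θ ∈ ℝ. Let θ̄ ∈ ℝ, θ̄ ≠ 0, satisfy the linear separability condition Δ(θ̄) > 0, where Δ(θ) = min_{x ∈ D^E ∪ D^{S,1}} θ·φ(x) − max_{y ∈ D^{S,2}} θ·φ(y), and suppose θ* ∈ ℝ is a global minimizer of L. Then Δ(θ*) > 0 if and only if (1/|D^S|) Σ_{x ∈ D^S} φ(x)·θ̄ < (1/|D^E|) Σ_{x ∈ D^E} φ(x)·θ̄. -/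
open Finset

noncomputable def gd (a θ : ℝ) : ℝ := a * (Real.exp (a * θ) / (1 + Real.exp (a * θ)))

lemma sig_strictMono : StrictMono (fun x : ℝ => Real.exp x / (1 + Real.exp x)) := by
  intro x y hxy
  have hx := Real.exp_pos x
  have hy := Real.exp_pos y
  have h := Real.exp_lt_exp.mpr hxy
  rw [div_lt_div_iff₀ (by linarith) (by linarith)]
  nlinarith

lemma gd_zero (a : ℝ) : gd a 0 = a / 2 := by
  simp [gd, Real.exp_zero]
  ring

lemma gd_mono (a : ℝ) : Monotone (gd a) := by
  rcases lt_trichotomy a 0 with h | h | h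
  · intro θ1 θ2 hθ
    have h1 : a * θ2 ≤ a * θ1 := mul_le_mul_of_nonpos_left hθ h.le
    have h2 := sig_strictMono.monotone h1
    exact mul_le_mul_of_nonpos_left h2 h.le
  · subst h; intro θ1 θ2 _; simp [gd]
  · intro θ1 θ2 hθ
    have h1 : a * θ1 ≤ a * θ2 := mul_le_mul_of_nonneg_left hθ h.le
    have h2 := sig_strictMono.monotone h1
    exact mul_le_mul_of_nonneg_left h2 h.le

lemma gd_strictMono {a : ℝ} (ha : a ≠ 0) : StrictMono (gd a) := by
  rcases ha.lt_or_gt with h | h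
  · intro θ1 θ2 hθ
    have h1 : a * θ2 < a * θ1 := by nlinarith
    have h2 := sig_strictMono h1
    exact mul_lt_mul_of_neg_left h2 h
  · intro θ1 θ2 hθ
    have h1 : a * θ1 < a * θ2 := by nlinarith
    have h2 := sig_strictMono h1
    exact mul_lt_mul_of_pos_left h2 h

lemma hasDerivAt_gd (a θ : ℝ) :
    HasDerivAt (fun t => Real.log (1 + Real.exp (a * t))) (gd a θ) θ := by
  have h1 : HasDerivAt (fun t : ℝ => a * t) a θ := by
    simpa using (hasDerivAt_id θ).const_mul a
  have h2 := (Real.hasDerivAt_exp (a * θ)).comp θ h1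
  have h3 : HasDerivAt (fun t => 1 + Real.exp (a * t)) (Real.exp (a * θ) * a) θ :=
    h2.const_add 1
  have hpos : (0 : ℝ) < 1 + Real.exp (a * θ) := by positivity
  have h4 := (Real.hasDerivAt_log hpos.ne').comp θ h3
  have hg : gd a θ = (1 + Real.exp (a * θ))⁻¹ * (Real.exp (a * θ) * a) := by
    unfold gd
    ring
  rw [hg]
  exact h4

noncomputable def Dtot (mE m1 m2 : ℕ) (φE : Fin mE → ℝ) (φ1 : Fin m1 → ℝ)
    (φ2 : Fin m2 → ℝ) (θ : ℝ) : ℝ :=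
  (1 / (mE : ℝ)) * ∑ i, gd (-(φE i)) θ +
  (1 / ((mE : ℝ) + m1 + m2)) *
    ((∑ i, gd (φE i) θ) + (∑ j, gd (φ1 j) θ) + (∑ k, gd (φ2 k) θ))

/-- **Theorem 6 (sharp condition for WBCU in dimension `d = 1`).**
Let `D^E` (expert samples, features `φE`), `D^{S,1}` (expert-generated supplementary
samples, features `φ1`) and `D^{S,2}` (sub-optimal supplementary samples, features `φ2`)
be finite multisets of real features, `D^S = D^{S,1} ∪ D^{S,2}`, with logistic loss
`L(θ) = (1/|D^E|) Σ_{x ∈ D^E} log(1 + exp(−φ(x)θ)) + (1/|D^U|) Σ_{x ∈ D^U} log(1 + exp(φ(x)θ))`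
where `D^U = D^E ∪ D^S`, and margin
`Δ(θ) = min_{x ∈ D^E ∪ D^{S,1}} θ·φ(x) − max_{y ∈ D^{S,2}} θ·φ(y)`.
If `θ̄ ≠ 0` satisfies the linear separability condition `Δ(θ̄) > 0` and `θ*` is a global
minimizer of `L`, then `Δ(θ*) > 0` if and only if
`(1/|D^S|) Σ_{x ∈ D^S} φ(x)·θ̄ < (1/|D^E|) Σ_{x ∈ D^E} φ(x)·θ̄`. -/
theorem wbcu_one_dimensional_sharp_condition
    (mE m1 m2 : ℕ) (hmE : 0 < mE) (hm2 : 0 < m2)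
    (φE : Fin mE → ℝ) (φ1 : Fin m1 → ℝ) (φ2 : Fin m2 → ℝ)
    (L : ℝ → ℝ)
    (hL : ∀ θ, L θ =
      (1 / (mE : ℝ)) * ∑ i, Real.log (1 + Real.exp (-(φE i * θ))) +
      (1 / ((mE : ℝ) + m1 + m2)) *
        ((∑ i, Real.log (1 + Real.exp (φE i * θ))) +
         (∑ j, Real.log (1 + Real.exp (φ1 j * θ))) +
         (∑ k, Real.log (1 + Real.exp (φ2 k * θ)))))
    (Δ : ℝ → ℝ)
    (hΔ : ∀ θ, Δ θ =
      Finset.univ.inf' ⟨Sum.inl ⟨0, hmE⟩, Finset.mem_univ _⟩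
          (fun i : Fin mE ⊕ Fin m1 => θ * Sum.elim φE φ1 i) -
        Finset.univ.sup' ⟨⟨0, hm2⟩, Finset.mem_univ _⟩ (fun k : Fin m2 => θ * φ2 k))
    (θb : ℝ) (hθb : θb ≠ 0) (hsep : 0 < Δ θb)
    (θs : ℝ) (hmin : ∀ θ, L θs ≤ L θ) :
    0 < Δ θs ↔
      (1 / ((m1 : ℝ) + m2)) * ((∑ j, φ1 j * θb) + ∑ k, φ2 k * θb)
        < (1 / (mE : ℝ)) * ∑ i, φE i * θb := by
  -- numeric positivity facts
  have hmE' : (0 : ℝ) < mE := by exact_mod_cast hmE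
  have hm2' : (0 : ℝ) < m2 := by exact_mod_cast hm2
  have hm1' : (0 : ℝ) ≤ m1 := Nat.cast_nonneg m1
  have hmS : (0 : ℝ) < (m1 : ℝ) + m2 := by linarith
  have hmU : (0 : ℝ) < (mE : ℝ) + m1 + m2 := by linarith
  -- characterization of positivity of the margin
  have hΔpos : ∀ θ, 0 < Δ θ ↔
      ∀ (i : Fin mE ⊕ Fin m1) (k : Fin m2),
        θ * φ2 k < θ * Sum.elim φE φ1 i := by
    intro θ
    rw [hΔ θ, sub_pos]
    erw [Finset.sup'_lt_iff]
    constructor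
    · intro h i k
      exact (Finset.lt_inf'_iff _).mp (h k (Finset.mem_univ k)) i (Finset.mem_univ i)
    · intro h k _
      exact (Finset.lt_inf'_iff _).mpr (fun i _ => h i k)
  have hsep' := (hΔpos θb).mp hsep
  -- the margin at θs is positive iff θs points in the direction of θb
  have key1 : 0 < Δ θs ↔ 0 < θs * θb := by
    rw [hΔpos θs]
    constructor
    · intro h
      have h1 := h (Sum.inl ⟨0, hmE⟩) ⟨0, hm2⟩
      have h2 := hsep' (Sum.inl ⟨0, hmE⟩) ⟨0, hm2⟩
      simp only [Sum.elim_inl] at h1 h2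
      set Dd := φE ⟨0, hmE⟩ - φ2 ⟨0, hm2⟩ with hDd
      have hA : 0 < θs * Dd := by rw [hDd]; nlinarith
      have hB : 0 < θb * Dd := by rw [hDd]; nlinarith
      by_contra hc
      push_neg at hc
      nlinarith [mul_pos hA hB, sq_nonneg Dd]
    · intro h i k
      have h2 := hsep' i k
      nlinarith [mul_pos h (sub_pos.mpr h2), sq_nonneg θb]
  -- derivative of L
  have hD : ∀ θ, HasDerivAt L (Dtot mE m1 m2 φE φ1 φ2 θ) θ := by
    intro θ
    have hE : HasDerivAt (fun t => ∑ i, Real.log (1 + Real.exp (-(φE i * t))))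
        (∑ i, gd (-(φE i)) θ) θ := by
      apply HasDerivAt.fun_sum
      intro i _
      simpa [neg_mul] using hasDerivAt_gd (-(φE i)) θ
    have hE2 : HasDerivAt (fun t => ∑ i, Real.log (1 + Real.exp (φE i * t)))
        (∑ i, gd (φE i) θ) θ :=
      HasDerivAt.fun_sum (fun i _ => hasDerivAt_gd (φE i) θ)
    have h1 : HasDerivAt (fun t => ∑ j, Real.log (1 + Real.exp (φ1 j * t)))
        (∑ j, gd (φ1 j) θ) θ :=
      HasDerivAt.fun_sum (fun j _ => hasDerivAt_gd (φ1 j) θ)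
    have h2 : HasDerivAt (fun t => ∑ k, Real.log (1 + Real.exp (φ2 k * t)))
        (∑ k, gd (φ2 k) θ) θ :=
      HasDerivAt.fun_sum (fun k _ => hasDerivAt_gd (φ2 k) θ)
    have hF := (hE.const_mul (1 / (mE : ℝ))).add
      (((hE2.add h1).add h2).const_mul (1 / ((mE : ℝ) + m1 + m2)))
    have hLeq : L = fun t =>
        (1 / (mE : ℝ)) * ∑ i, Real.log (1 + Real.exp (-(φE i * t))) +
        (1 / ((mE : ℝ) + m1 + m2)) *
          ((∑ i, Real.log (1 + Real.exp (φE i * t))) +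
           (∑ j, Real.log (1 + Real.exp (φ1 j * t))) +
           (∑ k, Real.log (1 + Real.exp (φ2 k * t)))) := funext hL
    rw [hLeq]
    exact hF
  -- at least one relevant feature is nonzero
  have hne : φE ⟨0, hmE⟩ ≠ 0 ∨ φ2 ⟨0, hm2⟩ ≠ 0 := by
    by_contra hc
    push_neg at hc
    have h2 := hsep' (Sum.inl ⟨0, hmE⟩) ⟨0, hm2⟩
    simp only [Sum.elim_inl, hc.1, hc.2, mul_zero] at h2
    exact lt_irrefl _ h2
  -- strict monotonicity of the derivative
  have hstrict : StrictMono (Dtot mE m1 m2 φE φ1 φ2) := by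
    intro θ1 θ2 h12
    have hsN : ∑ i, gd (-(φE i)) θ1 ≤ ∑ i, gd (-(φE i)) θ2 :=
      Finset.sum_le_sum (fun i _ => gd_mono _ h12.le)
    have hs1 : ∑ j, gd (φ1 j) θ1 ≤ ∑ j, gd (φ1 j) θ2 :=
      Finset.sum_le_sum (fun j _ => gd_mono _ h12.le)
    have hgroup : (∑ i, gd (φE i) θ1) + (∑ j, gd (φ1 j) θ1) + (∑ k, gd (φ2 k) θ1)
        < (∑ i, gd (φE i) θ2) + (∑ j, gd (φ1 j) θ2) + (∑ k, gd (φ2 k) θ2) := by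
      rcases hne with hE0 | h20
      · have hsE : ∑ i, gd (φE i) θ1 < ∑ i, gd (φE i) θ2 :=
          Finset.sum_lt_sum (fun i _ => gd_mono _ h12.le)
            ⟨⟨0, hmE⟩, Finset.mem_univ _, gd_strictMono hE0 h12⟩
        have hs2 : ∑ k, gd (φ2 k) θ1 ≤ ∑ k, gd (φ2 k) θ2 :=
          Finset.sum_le_sum (fun k _ => gd_mono _ h12.le)
        linarith
      · have hsE : ∑ i, gd (φE i) θ1 ≤ ∑ i, gd (φE i) θ2 :=
          Finset.sum_le_sum (fun i _ => gd_mono _ h12.le)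
        have hs2 : ∑ k, gd (φ2 k) θ1 < ∑ k, gd (φ2 k) θ2 :=
          Finset.sum_lt_sum (fun k _ => gd_mono _ h12.le)
            ⟨⟨0, hm2⟩, Finset.mem_univ _, gd_strictMono h20 h12⟩
        linarith
    have c1 : (0 : ℝ) < 1 / (mE : ℝ) := by positivity
    have c2 : (0 : ℝ) < 1 / ((mE : ℝ) + m1 + m2) := by positivity
    have t1 := mul_le_mul_of_nonneg_left hsN c1.le
    have t2 := mul_lt_mul_of_pos_left hgroup c2
    unfold Dtot
    linarith
  -- the derivative vanishes at the minimizer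
  have hloc : IsLocalMin L θs := Filter.Eventually.of_forall hmin
  have hDs : Dtot mE m1 m2 φE φ1 φ2 θs = 0 := hloc.hasDerivAt_eq_zero (hD θs)
  -- value of the derivative at 0
  have hD0 : Dtot mE m1 m2 φE φ1 φ2 0 =
      (1 / (mE : ℝ)) * (-(∑ i, φE i) / 2) +
      (1 / ((mE : ℝ) + m1 + m2)) *
        ((∑ i, φE i) / 2 + (∑ j, φ1 j) / 2 + (∑ k, φ2 k) / 2) := by
    unfold Dtot
    simp only [gd_zero]
    rw [← Finset.sum_div, ← Finset.sum_div, ← Finset.sum_div, ← Finset.sum_div,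
      Finset.sum_neg_distrib]
  -- translate direction of θs into the sign of the derivative at 0
  have key2 : 0 < θs * θb ↔ θb * Dtot mE m1 m2 φE φ1 φ2 0 < 0 := by
    rcases hθb.lt_or_gt with hb | hb
    · -- θb < 0
      have e2 : 0 < Dtot mE m1 m2 φE φ1 φ2 0 ↔ θs < 0 := by
        rw [← hDs]
        exact hstrict.lt_iff_lt
      constructor
      · intro h
        have hθs : θs < 0 := by nlinarith
        have := e2.mpr hθs
        exact mul_neg_of_neg_of_pos hb this
      · intro h
        have hpos : 0 < Dtot mE m1 m2 φE φ1 φ2 0 := by nlinarith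
        have hθs := e2.mp hpos
        nlinarith
    · -- θb > 0
      have e1 : Dtot mE m1 m2 φE φ1 φ2 0 < 0 ↔ 0 < θs := by
        rw [← hDs]
        exact hstrict.lt_iff_lt
      constructor
      · intro h
        have hθs : 0 < θs := by nlinarith
        exact mul_neg_of_pos_of_neg hb (e1.mpr hθs)
      · intro h
        have hneg : Dtot mE m1 m2 φE φ1 φ2 0 < 0 := by nlinarith
        exact mul_pos (e1.mp hneg) hb
  -- final arithmetic equivalence
  have key3 : θb * Dtot mE m1 m2 φE φ1 φ2 0 < 0 ↔
      (1 / ((m1 : ℝ) + m2)) * ((∑ j, φ1 j * θb) + ∑ k, φ2 k * θb)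
        < (1 / (mE : ℝ)) * ∑ i, φE i * θb := by
    rw [← Finset.sum_mul, ← Finset.sum_mul, ← Finset.sum_mul]
    set SE := ∑ i, φE i with hSE
    set S1 := ∑ j, φ1 j with hS1
    set S2 := ∑ k, φ2 k with hS2
    have hA : θb * Dtot mE m1 m2 φE φ1 φ2 0 =
        (θb * (S1 + S2) * mE - θb * SE * ((m1 : ℝ) + m2)) /
          (2 * (mE : ℝ) * ((mE : ℝ) + m1 + m2)) := by
      rw [hD0]
      field_simp
      ring
    have hB : (1 / ((m1 : ℝ) + m2)) * (S1 * θb + S2 * θb) -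
        (1 / (mE : ℝ)) * (SE * θb) =
        (θb * (S1 + S2) * mE - θb * SE * ((m1 : ℝ) + m2)) /
          (((m1 : ℝ) + m2) * mE) := by
      field_simp
    have hden1 : (0 : ℝ) < 2 * (mE : ℝ) * ((mE : ℝ) + m1 + m2) := by positivity
    have hden2 : (0 : ℝ) < ((m1 : ℝ) + m2) * mE := mul_pos hmS hmE'
    constructor
    · intro h
      rw [hA, div_lt_iff₀ hden1, zero_mul] at h
      have := div_neg_of_neg_of_pos h hden2
      rw [← hB] at this
      linarith
    · intro h
      have hdiff : (1 / ((m1 : ℝ) + m2)) * (S1 * θb + S2 * θb) -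
          (1 / (mE : ℝ)) * (SE * θb) < 0 := by linarith
      rw [hB, div_lt_iff₀ hden2, zero_mul] at hdiff
      rw [hA]
      exact div_neg_of_neg_of_pos hdiff hden1
  exact (key1.trans key2).trans key3
end
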